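/- arXiv:1507.02413 — 6 statements merged into one kernel-verified Lean document; each statement's English description precedes it below -/
import Mathlib

section
/- Every segmented downward directed set of indices 𝕀=(I,≤,𝓘) is isomorphic, in the category of sets of indices, to its canonical set of indices 𝕀̄=(I,≤,𝒮_I) where 𝒮_I = {(∅,a] | a∈I} ∪ {I}; the isomorphism is induced by the identity map on I. -/
/-- A set of indices `𝕀 = (I, ≤, 𝓘)`. -/
structure SoI (I : Type) where
  le : I → I → Prop
  refl : ∀ a, le a a
  trans : ∀ a b c, le a b → le b c → le a c
  sets : Set (Set I)
  empty_not_mem : ∅ ∉ sets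
  univ_mem : Set.univ ∈ sets
  inter : ∀ A ∈ sets, ∀ B ∈ sets, ∃ C ∈ sets, C ⊆ A ∩ B
  directed : ∀ (e a : I), ∀ A ∈ sets, a ∈ A → le e a →
    (∃ x, x ∈ A ∧ le x e) ∧
    ∀ b c : I, b ∈ A → le b e → c ∈ A → le c e →
      ∃ d, d ∈ A ∧ le d e ∧ (le d b ∧ d ≠ b) ∧ (le d c ∧ d ≠ c)

/-- `A_{≤ a}` -/
def SoI.down {I : Type} (S : SoI I) (A : Set I) (a : I) : Set I :=
  {ε | ε ∈ A ∧ S.le ε a}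

/-- `f : A_{≤a} → B_{≤b}` is infinitesimal. -/
def Infinitesimal {I₁ I₂ : Type} (S₁ : SoI I₁) (S₂ : SoI I₂) (f : I₂ → I₁)
    (A : Set I₁) (a : I₁) (B : Set I₂) (b : I₂) : Prop :=
  ∀ α ∈ S₁.down A a, ∃ e ∈ S₂.down B b, ∀ ε₂ ∈ S₂.down B e, f ε₂ ∈ S₁.down A α

/-- `f : 𝕀₁ → 𝕀₂` is a morphism of sets of indices. -/
def IsMorphism {I₁ I₂ : Type} (S₁ : SoI I₁) (S₂ : SoI I₂) (f : I₂ → I₁) : Prop :=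
  ∀ A ∈ S₁.sets, ∀ a ∈ A, ∃ B ∈ S₂.sets, ∀ b ∈ B, Infinitesimal S₁ S₂ f A a B b

/-- `P ε` holds for `ε` sufficiently small in `A_{≤a}`. -/
def EvSmallOn {I : Type} (S : SoI I) (A : Set I) (a : I) (P : I → Prop) : Prop :=
  ∃ e ∈ S.down A a, ∀ ε ∈ S.down A e, P ε

/-- `P ε` holds for `ε` sufficiently small in `𝕀`. -/
def EvSmall {I : Type} (S : SoI I) (P : I → Prop) : Prop :=
  ∃ A ∈ S.sets, ∀ a ∈ A, EvSmallOn S A a P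

/-- `i >_𝕀 j`. -/
def NetGt {I : Type} (S : SoI I) (i j : I → ℝ) : Prop :=
  EvSmall S fun ε => i ε > j ε

/-- `x_ε = O_{a,A}(y_ε)`. -/
def BigOOn {I : Type} (S : SoI I) (A : Set I) (a : I) (x y : I → ℝ) : Prop :=
  ∃ H : ℝ, 0 < H ∧ ∃ ε₀ ∈ S.down A a, ∀ ε ∈ S.down A ε₀, |x ε| ≤ H * |y ε|

/-- `x_ε = O(y_ε)` as `ε ∈ 𝕀`. -/
def BigO {I : Type} (S : SoI I) (x y : I → ℝ) : Prop :=
  ∃ A ∈ S.sets, ∀ a ∈ A, BigOOn S A a x y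

/-- `lim_𝕀 i = +∞`. -/
def LimTop {I : Type} (S : SoI I) (i : I → ℝ) : Prop :=
  ∃ A ∈ S.sets, ∀ a ∈ A, ∀ M : ℝ, ∃ e, S.le e a ∧ ∀ ε ∈ A, S.le ε e → M < i ε

/-- `ℬ` is an asymptotic gauge on `𝕀`. -/
def IsAG {I : Type} (S : SoI I) (B : Set (I → ℝ)) : Prop :=
  (∃ i ∈ B, LimTop S i) ∧
  (∀ i ∈ B, ∀ j ∈ B, ∃ p ∈ B, BigO S (fun ε => i ε * j ε) p) ∧
  (∀ i ∈ B, ∀ r : ℝ, ∃ σ ∈ B, BigO S (fun ε => r * i ε) σ) ∧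
  (∀ i ∈ B, ∀ j ∈ B, ∃ s ∈ B, NetGt S s (fun _ => 0) ∧
    BigO S (fun ε => |i ε| + |j ε|) s)

/-- The moderate nets `ℝ_M(ℬ)`. -/
def RM {I : Type} (S : SoI I) (B : Set (I → ℝ)) : Set (I → ℝ) :=
  {x | ∃ b ∈ B, BigO S x b}

/-- `ℬ ∘ f = {b ∘ f ∣ b ∈ ℬ}`. -/
def compAG {I₁ I₂ : Type} (B : Set (I₁ → ℝ)) (f : I₂ → I₁) : Set (I₂ → ℝ) :=
  {g | ∃ b ∈ B, g = b ∘ f}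

/-- `𝕀` is segmented. -/
def Segmented {I : Type} (S : SoI I) : Prop :=
  ∀ A ∈ S.sets, ∃ a, {ε | S.le ε a} ⊆ A

/-- `(I, ≤)` is downward directed. -/
def DownDirected {I : Type} (S : SoI I) : Prop :=
  ∀ a b, ∃ c, S.le c a ∧ S.le c b

/-- Every segmented downward directed set of indices is isomorphic to its
canonical set of indices `(I, ≤, 𝒮_I)`, the isomorphism being induced by the
identity of `I` in both directions. -/
theorem canonical_iso {I : Type} (S : SoI I)
    (hseg : Segmented S) (hdd : DownDirected S)
    (Sbar : SoI I) (hle : Sbar.le = S.le)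
    (hsets : Sbar.sets = {B | ∃ a, B = {ε | S.le ε a}} ∪ {Set.univ}) :
    IsMorphism S Sbar id ∧ IsMorphism Sbar S id := by
  constructor
  · -- S → Sbar
    intro A hA a _ha
    obtain ⟨a₀, ha₀⟩ := hseg A hA
    refine ⟨{ε | S.le ε a₀}, ?_, ?_⟩
    · rw [hsets]; exact Or.inl ⟨a₀, rfl⟩
    · intro b hb α hα
      obtain ⟨c, hcb, hcα⟩ := hdd b α
      refine ⟨c, ⟨?_, ?_⟩, ?_⟩
      · exact S.trans c b a₀ hcb hb
      · rw [hle]; exact hcb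
      · rintro ε ⟨hεB, hεc⟩
        rw [hle] at hεc
        exact ⟨ha₀ hεB, S.trans ε c α hεc hcα⟩
  · -- Sbar → S
    intro B hB b _hb
    refine ⟨Set.univ, S.univ_mem, ?_⟩
    intro a _ β hβ
    simp only [SoI.down, hle, Set.mem_setOf_eq] at hβ
    obtain ⟨c, hca, hcβ⟩ := hdd a β
    refine ⟨c, ⟨trivial, hca⟩, ?_⟩
    rintro ε ⟨_, hεc⟩
    have hεβ : S.le ε β := S.trans ε c β hεc hcβ
    rw [hsets] at hB
    rcases hB with ⟨a₀, rfl⟩ | hB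
    · exact ⟨S.trans ε β a₀ hεβ hβ.1, by rw [hle]; exact hεβ⟩
    · have : B = Set.univ := hB
      subst this
      exact ⟨trivial, by rw [hle]; exact hεβ⟩
end

section
/- Let ℬ₁ = AG(b₁) and ℬ₂ = AG(b₂) be principal asymptotic gauges on the special set of indices 𝕀ˢ with ℝ_M(ℬ₁) ⊊ ℝ_M(ℬ₂). Then there exists a principal asymptotic gauge ℬ₃ on 𝕀ˢ with ℝ_M(ℬ₁) ⊊ ℝ_M(ℬ₃) ⊊ ℝ_M(ℬ₂). -/
/-- The carrier `(0,1]` of the special set of indices. -/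
def I01 : Type := {x : ℝ // 0 < x ∧ x ≤ 1}

/-- `P` holds for `ε` sufficiently small, i.e. eventually as `ε → 0⁺`. -/
def EvS (P : I01 → Prop) : Prop :=
  ∃ ε₀ : I01, ∀ ε : I01, ε.1 ≤ ε₀.1 → P ε

/-- `x_ε = O(y_ε)` as `ε → 0⁺` (the big-O of the special set of indices). -/
def BigOs (x y : I01 → ℝ) : Prop :=
  ∃ H : ℝ, 0 < H ∧ EvS fun ε => |x ε| ≤ H * |y ε|

/-- The moderate nets `ℝ_M(ℬ)` on the special set of indices. -/
def RMs (B : Set (I01 → ℝ)) : Set (I01 → ℝ) :=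
  {x | ∃ b ∈ B, BigOs x b}

/-- `AG(b) = {b^m ∣ m ∈ ℕ}`. -/
def AGgen (b : I01 → ℝ) : Set (I01 → ℝ) :=
  {g | ∃ m : ℕ, g = fun ε => (b ε) ^ m}

/-- `lim_{ε→0⁺} i_ε = +∞`. -/
def LimTopS (i : I01 → ℝ) : Prop :=
  ∀ M : ℝ, EvS fun ε => M < i ε

/-- `ℬ` is an asymptotic gauge on the special set of indices. -/
def IsAGs (B : Set (I01 → ℝ)) : Prop :=
  (∃ i ∈ B, LimTopS i) ∧
  (∀ i ∈ B, ∀ j ∈ B, ∃ p ∈ B, BigOs (fun ε => i ε * j ε) p) ∧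
  (∀ i ∈ B, ∀ r : ℝ, ∃ σ ∈ B, BigOs (fun ε => r * i ε) σ) ∧
  (∀ i ∈ B, ∀ j ∈ B, ∃ s ∈ B, (EvS fun ε => 0 < s ε) ∧
    BigOs (fun ε => |i ε| + |j ε|) s)

/-- A principal AG: one admitting a generator. -/
def Principal (B : Set (I01 → ℝ)) : Prop :=
  IsAGs B ∧ ∃ b ∈ B, RMs (AGgen b) = RMs B

/-- `ℬ ∘ f`. -/
def compS (B : Set (I01 → ℝ)) (f : I01 → I01) : Set (I01 → ℝ) :=
  {g | ∃ b ∈ B, g = b ∘ f}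

/-- The filter `ε → 0⁺` on `(0,1]`. -/
def zeroPlus : Filter I01 :=
  Filter.comap (fun ε : I01 => ε.1) (nhdsWithin 0 (Set.Ioi 0))

-- helpers
def I01min (a b : I01) : I01 :=
  ⟨min a.1 b.1, lt_min a.2.1 b.2.1, le_trans (min_le_left _ _) a.2.2⟩

lemma EvS_of_all {P : I01 → Prop} (h : ∀ ε, P ε) : EvS P :=
  ⟨⟨1, one_pos, le_refl 1⟩, fun ε _ => h ε⟩

lemma EvS_and {P Q : I01 → Prop} (hP : EvS P) (hQ : EvS Q) :
    EvS fun ε => P ε ∧ Q ε := by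
  obtain ⟨a, ha⟩ := hP
  obtain ⟨b, hb⟩ := hQ
  exact ⟨I01min a b, fun ε hε =>
    ⟨ha ε (hε.trans (min_le_left _ _)), hb ε (hε.trans (min_le_right _ _))⟩⟩

lemma EvS_mono {P Q : I01 → Prop} (hP : EvS P) (h : ∀ ε, P ε → Q ε) : EvS Q := by
  obtain ⟨a, ha⟩ := hP
  exact ⟨a, fun ε hε => h ε (ha ε hε)⟩

lemma mem_RMs_iff {x b : I01 → ℝ} :
    x ∈ RMs (AGgen b) ↔ ∃ m : ℕ, ∃ H : ℝ, 0 < H ∧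
      EvS fun ε => |x ε| ≤ H * |b ε| ^ m := by
  constructor
  · rintro ⟨g, ⟨m, rfl⟩, H, hH, hev⟩
    exact ⟨m, H, hH, EvS_mono hev (fun ε h => by simpa [abs_pow] using h)⟩
  · rintro ⟨m, H, hH, hev⟩
    exact ⟨fun ε => b ε ^ m, ⟨m, rfl⟩, H, hH,
      EvS_mono hev (fun ε h => by simpa [abs_pow] using h)⟩

lemma self_mem_RMs (b : I01 → ℝ) : b ∈ RMs (AGgen b) :=
  mem_RMs_iff.mpr ⟨1, 1, one_pos, EvS_of_all fun ε => by simp⟩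

lemma abs_limTop {b : I01 → ℝ} (h : IsAGs (AGgen b)) :
    ∀ M : ℝ, EvS fun ε => M < |b ε| := by
  obtain ⟨i, ⟨m, rfl⟩, hlim⟩ := h.1
  have hm : m ≠ 0 := by
    rintro rfl
    obtain ⟨ε₀, hε₀⟩ := hlim 1
    simpa using hε₀ ε₀ le_rfl
  intro M
  refine EvS_mono (hlim (max M 0 ^ m)) (fun ε hε => ?_)
  by_contra hc
  push_neg at hc
  have h1 : |b ε| ≤ max M 0 := hc.trans (le_max_left _ _)
  have h2 : b ε ^ m ≤ |b ε| ^ m := by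
    calc b ε ^ m ≤ |b ε ^ m| := le_abs_self _
    _ = |b ε| ^ m := abs_pow _ _
  exact absurd (h2.trans (pow_le_pow_left₀ (abs_nonneg _) h1 m)) (not_le.mpr hε)

lemma isAGs_of (b : I01 → ℝ) (hb : ∀ ε, 1 ≤ b ε) (hlim : LimTopS b) :
    IsAGs (AGgen b) := by
  have hb0 : ∀ ε, 0 ≤ b ε := fun ε => le_trans zero_le_one (hb ε)
  refine ⟨⟨b, ⟨1, by funext ε; rw [pow_one]⟩, hlim⟩, ?_, ?_, ?_⟩
  · rintro i ⟨m, rfl⟩ j ⟨k, rfl⟩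
    refine ⟨fun ε => b ε ^ (m + k), ⟨m + k, rfl⟩, 1, one_pos,
      EvS_of_all fun ε => ?_⟩
    show |b ε ^ m * b ε ^ k| ≤ 1 * |b ε ^ (m + k)|
    rw [one_mul, ← pow_add]
  · rintro i ⟨m, rfl⟩ r
    refine ⟨fun ε => b ε ^ m, ⟨m, rfl⟩, |r| + 1, by positivity,
      EvS_of_all fun ε => ?_⟩
    rw [abs_mul]
    exact mul_le_mul_of_nonneg_right (by linarith [abs_nonneg r]) (abs_nonneg _)
  · rintro i ⟨m, rfl⟩ j ⟨k, rfl⟩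
    refine ⟨fun ε => b ε ^ (max m k), ⟨max m k, rfl⟩,
      EvS_of_all fun ε => pow_pos (lt_of_lt_of_le one_pos (hb ε)) _,
      2, two_pos, EvS_of_all fun ε => ?_⟩
    have h1 : b ε ^ m ≤ b ε ^ max m k := pow_le_pow_right₀ (hb ε) (le_max_left _ _)
    have h2 : b ε ^ k ≤ b ε ^ max m k := pow_le_pow_right₀ (hb ε) (le_max_right _ _)
    show |(|b ε ^ m| + |b ε ^ k|)| ≤ 2 * |b ε ^ (max m k)|
    rw [abs_of_nonneg (add_nonneg (abs_nonneg _) (abs_nonneg _)),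
      abs_of_nonneg (pow_nonneg (hb0 ε) m), abs_of_nonneg (pow_nonneg (hb0 ε) k),
      abs_of_nonneg (pow_nonneg (hb0 ε) _)]
    linarith

lemma RMs_sub {b c : I01 → ℝ} (p : ℕ) (K : ℝ) (hK : 0 < K)
    (h : EvS fun ε => |b ε| ≤ K * |c ε| ^ p) :
    RMs (AGgen b) ⊆ RMs (AGgen c) := by
  intro x hx
  obtain ⟨m, H, hH, hev⟩ := mem_RMs_iff.mp hx
  refine mem_RMs_iff.mpr ⟨p * m, H * K ^ m, by positivity, ?_⟩
  refine EvS_mono (EvS_and hev h) (fun ε ⟨h1, h2⟩ => ?_)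
  have : |b ε| ^ m ≤ (K * |c ε| ^ p) ^ m := pow_le_pow_left₀ (abs_nonneg _) h2 m
  calc |x ε| ≤ H * |b ε| ^ m := h1
  _ ≤ H * (K * |c ε| ^ p) ^ m := by nlinarith [pow_nonneg (abs_nonneg (b ε)) m]
  _ = H * K ^ m * |c ε| ^ (p * m) := by rw [mul_pow, ← pow_mul]; ring

/-- Between the moderate classes of two principal AGs on `𝕀ˢ` there always is
a third one, strictly. -/
theorem principal_dense (b₁ b₂ : I01 → ℝ)
    (h1 : IsAGs (AGgen b₁)) (h2 : IsAGs (AGgen b₂))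
    (hsub : RMs (AGgen b₁) ⊂ RMs (AGgen b₂)) :
    ∃ b₃ : I01 → ℝ, IsAGs (AGgen b₃) ∧
      RMs (AGgen b₁) ⊂ RMs (AGgen b₃) ∧
      RMs (AGgen b₃) ⊂ RMs (AGgen b₂) := by
  have hb1 := abs_limTop h1
  have hb2 := abs_limTop h2
  obtain ⟨x, hx2, hx1⟩ := Set.not_subset.mp hsub.2
  obtain ⟨n, H₂, hH₂, hxev⟩ := mem_RMs_iff.mp hx2
  set d : I01 → ℝ := fun ε => |b₂ ε| ^ n with hd_def
  have hd : d ∉ RMs (AGgen b₁) := by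
    intro hdmem
    obtain ⟨m, H, hH, hev⟩ := mem_RMs_iff.mp hdmem
    apply hx1
    refine mem_RMs_iff.mpr ⟨m, H₂ * H, by positivity, ?_⟩
    refine EvS_mono (EvS_and hxev hev) ?_
    rintro ε ⟨ha, hb⟩
    have hd0 : |d ε| = |b₂ ε| ^ n := abs_of_nonneg (pow_nonneg (abs_nonneg _) n)
    calc |x ε| ≤ H₂ * |b₂ ε| ^ n := ha
    _ = H₂ * |d ε| := by rw [hd0]
    _ ≤ H₂ * (H * |b₁ ε| ^ m) := mul_le_mul_of_nonneg_left hb hH₂.le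
    _ = H₂ * H * |b₁ ε| ^ m := by ring
  set A : I01 → ℝ := fun ε => max (Real.log |b₁ ε|) 1 with hA_def
  set C : I01 → ℝ := fun ε => max ((n : ℝ) * Real.log |b₂ ε|) (A ε) with hC_def
  set b₃ : I01 → ℝ := fun ε => Real.exp (Real.sqrt (A ε * C ε)) with hb3_def
  have hA1 : ∀ ε, 1 ≤ A ε := fun ε => le_max_right _ _
  have hA0 : ∀ ε, 0 < A ε := fun ε => lt_of_lt_of_le one_pos (hA1 ε)
  have hACle : ∀ ε, A ε ≤ C ε := fun ε => le_max_right _ _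
  have hC0 : ∀ ε, 0 < C ε := fun ε => lt_of_lt_of_le (hA0 ε) (hACle ε)
  have hAB : ∀ ε, A ε ≤ Real.sqrt (A ε * C ε) := by
    intro ε
    have h := Real.sqrt_le_sqrt (mul_le_mul_of_nonneg_left (hACle ε) (hA0 ε).le)
    rwa [Real.sqrt_mul_self (hA0 ε).le] at h
  have hBC : ∀ ε, Real.sqrt (A ε * C ε) ≤ C ε := by
    intro ε
    have h := Real.sqrt_le_sqrt (mul_le_mul_of_nonneg_right (hACle ε) (hC0 ε).le)
    rwa [Real.sqrt_mul_self (hC0 ε).le] at h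
  have hB1 : ∀ ε, 1 ≤ Real.sqrt (A ε * C ε) := fun ε => le_trans (hA1 ε) (hAB ε)
  have hb3pos : ∀ ε, 0 < b₃ ε := fun ε => Real.exp_pos _
  have hb3one : ∀ ε, 1 ≤ b₃ ε :=
    fun ε => Real.one_le_exp (le_trans zero_le_one (hB1 ε))
  have hlogb3 : ∀ ε, Real.log (b₃ ε) = Real.sqrt (A ε * C ε) :=
    fun ε => Real.log_exp _
  have hexpb3 : ∀ ε, b₃ ε = Real.exp (Real.sqrt (A ε * C ε)) := fun ε => rfl
  -- b₃ blows up
  have hlim3 : LimTopS b₃ := by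
    intro M
    refine EvS_mono (hb1 (Real.exp M)) ?_
    intro ε hε
    have hM : M < Real.log |b₁ ε| := by
      have h := Real.log_lt_log (Real.exp_pos M) hε
      rwa [Real.log_exp] at h
    have h1 : M < A ε := lt_of_lt_of_le hM (le_max_left _ _)
    have h2 := hAB ε
    have h3 : Real.sqrt (A ε * C ε) < b₃ ε := by
      have h4 := Real.add_one_le_exp (Real.sqrt (A ε * C ε))
      rw [hexpb3 ε]; linarith
    linarith
  have hAG3 : IsAGs (AGgen b₃) := isAGs_of b₃ hb3one hlim3
  -- key: C is never eventually dominated by a multiple of A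
  have hCA : ∀ K : ℝ, 0 < K → ¬ EvS (fun ε => C ε ≤ K * A ε) := by
    intro K hK hev
    apply hd
    refine mem_RMs_iff.mpr ⟨⌈K⌉₊, 1, one_pos, ?_⟩
    refine EvS_mono (EvS_and hev (EvS_and (hb1 (Real.exp 1)) (hb2 1))) ?_
    rintro ε ⟨hCK, hb1e, hb2e⟩
    have hp1 : 0 < |b₁ ε| := lt_trans (Real.exp_pos 1) hb1e
    have hp2 : 0 < |b₂ ε| := lt_trans one_pos hb2e
    have hl1 : 1 ≤ Real.log |b₁ ε| := by
      have h := Real.log_le_log (Real.exp_pos 1) hb1e.le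
      rwa [Real.log_exp] at h
    have hAe : A ε = Real.log |b₁ ε| := max_eq_left hl1
    have h1 : (n : ℝ) * Real.log |b₂ ε| ≤ C ε := le_max_left _ _
    have h2 : C ε ≤ K * Real.log |b₁ ε| := by rw [← hAe]; exact hCK
    have h3 : K * Real.log |b₁ ε| ≤ (⌈K⌉₊ : ℝ) * Real.log |b₁ ε| :=
      mul_le_mul_of_nonneg_right (Nat.le_ceil K) (by linarith)
    have key : (n : ℝ) * Real.log |b₂ ε| ≤ (⌈K⌉₊ : ℝ) * Real.log |b₁ ε| := by linarith
    have e1 : |b₂ ε| ^ n = Real.exp ((n : ℝ) * Real.log |b₂ ε|) := by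
      rw [Real.exp_nat_mul, Real.exp_log hp2]
    have e2 : |b₁ ε| ^ ⌈K⌉₊ = Real.exp ((⌈K⌉₊ : ℝ) * Real.log |b₁ ε|) := by
      rw [Real.exp_nat_mul, Real.exp_log hp1]
    show |d ε| ≤ 1 * |b₁ ε| ^ ⌈K⌉₊
    rw [one_mul]
    have hd0 : |d ε| = |b₂ ε| ^ n := abs_of_nonneg (pow_nonneg (abs_nonneg _) n)
    rw [hd0, e1, e2]
    exact Real.exp_le_exp.mpr key
  -- RMs b₁ ⊆ RMs b₃
  have h13 : RMs (AGgen b₁) ⊆ RMs (AGgen b₃) := by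
    refine RMs_sub 1 1 one_pos ?_
    refine EvS_mono (hb1 1) ?_
    intro ε hε
    have hp1 : 0 < |b₁ ε| := lt_trans one_pos hε
    have h1 : |b₁ ε| ≤ b₃ ε := by
      rw [← Real.exp_log hp1, hexpb3 ε]
      exact Real.exp_le_exp.mpr (le_trans (le_max_left _ _) (hAB ε))
    calc |b₁ ε| ≤ b₃ ε := h1
    _ = 1 * |b₃ ε| ^ 1 := by rw [one_mul, pow_one, abs_of_pos (hb3pos ε)]
  -- b₃ is not b₁-moderate
  have hb3n1 : b₃ ∉ RMs (AGgen b₁) := by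
    intro hmem
    obtain ⟨m, H, hH, hev⟩ := mem_RMs_iff.mp hmem
    refine hCA ((|Real.log H| + (m : ℝ) + 1) ^ 2) (by positivity) ?_
    refine EvS_mono (EvS_and hev (hb1 (Real.exp 1))) ?_
    rintro ε ⟨hle, hb1e⟩
    have hp1 : 0 < |b₁ ε| := lt_trans (Real.exp_pos 1) hb1e
    have hl1 : 1 ≤ Real.log |b₁ ε| := by
      have h := Real.log_le_log (Real.exp_pos 1) hb1e.le
      rwa [Real.log_exp] at h
    have hAe : A ε = Real.log |b₁ ε| := max_eq_left hl1
    rw [abs_of_pos (hb3pos ε)] at hle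
    have hlog : Real.sqrt (A ε * C ε) ≤ Real.log H + (m : ℝ) * Real.log |b₁ ε| := by
      have h := Real.log_le_log (hb3pos ε) hle
      rwa [hlogb3 ε, Real.log_mul (ne_of_gt hH) (ne_of_gt (pow_pos hp1 m)),
        Real.log_pow] at h
    have hKA : Real.sqrt (A ε * C ε) ≤ (|Real.log H| + (m : ℝ) + 1) * A ε := by
      rw [← hAe] at hlog
      nlinarith [le_abs_self (Real.log H), abs_nonneg (Real.log H), hA1 ε,
        (Nat.cast_nonneg m : (0:ℝ) ≤ (m:ℝ))]
    have h0 : 0 ≤ A ε * C ε := mul_nonneg (hA0 ε).le (hC0 ε).le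
    have hsq := Real.sq_sqrt h0
    show C ε ≤ (|Real.log H| + (m : ℝ) + 1) ^ 2 * A ε
    nlinarith [hA0 ε, hC0 ε, Real.sqrt_nonneg (A ε * C ε)]
  -- RMs b₃ ⊆ RMs b₂
  have h32 : RMs (AGgen b₃) ⊆ RMs (AGgen b₂) := by
    obtain ⟨m₀, H₀, hH₀, hev₀⟩ := mem_RMs_iff.mp (hsub.1 (self_mem_RMs b₁))
    set K₁ := |Real.log H₀| + (m₀ : ℝ) + (n : ℝ) + 1 with hK₁def
    have hK₁1 : 1 ≤ K₁ := by
      rw [hK₁def]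
      have := abs_nonneg (Real.log H₀)
      have := (Nat.cast_nonneg m₀ : (0:ℝ) ≤ (m₀:ℝ))
      have := (Nat.cast_nonneg n : (0:ℝ) ≤ (n:ℝ))
      linarith
    refine RMs_sub ⌈K₁⌉₊ 1 one_pos ?_
    refine EvS_mono (EvS_and hev₀ (EvS_and (hb1 1) (hb2 (Real.exp 1)))) ?_
    rintro ε ⟨h01, hb1o, hb2e⟩
    have hp1 : 0 < |b₁ ε| := lt_trans one_pos hb1o
    have hp2 : 0 < |b₂ ε| := lt_trans (Real.exp_pos 1) hb2e
    have hl2 : 1 ≤ Real.log |b₂ ε| := by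
      have h := Real.log_le_log (Real.exp_pos 1) hb2e.le
      rwa [Real.log_exp] at h
    have hlb1 : Real.log |b₁ ε| ≤ Real.log H₀ + (m₀ : ℝ) * Real.log |b₂ ε| := by
      have h := Real.log_le_log hp1 h01
      rwa [Real.log_mul (ne_of_gt hH₀) (ne_of_gt (pow_pos hp2 m₀)),
        Real.log_pow] at h
    have hAle : A ε ≤ K₁ * Real.log |b₂ ε| := by
      apply max_le
      · rw [hK₁def]
        nlinarith [le_abs_self (Real.log H₀), abs_nonneg (Real.log H₀),
          (Nat.cast_nonneg m₀ : (0:ℝ) ≤ (m₀:ℝ)), (Nat.cast_nonneg n : (0:ℝ) ≤ (n:ℝ))]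
      · calc (1 : ℝ) ≤ Real.log |b₂ ε| := hl2
        _ ≤ K₁ * Real.log |b₂ ε| := le_mul_of_one_le_left (by linarith) hK₁1
    have hCle : C ε ≤ K₁ * Real.log |b₂ ε| := by
      apply max_le _ hAle
      rw [hK₁def]
      nlinarith [le_abs_self (Real.log H₀), abs_nonneg (Real.log H₀),
        (Nat.cast_nonneg m₀ : (0:ℝ) ≤ (m₀:ℝ)), (Nat.cast_nonneg n : (0:ℝ) ≤ (n:ℝ)), hl2]
    have hfin : b₃ ε ≤ |b₂ ε| ^ ⌈K₁⌉₊ := by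
      have h1 : Real.sqrt (A ε * C ε) ≤ (⌈K₁⌉₊ : ℝ) * Real.log |b₂ ε| := by
        have h2 := hBC ε
        have h3 : K₁ ≤ (⌈K₁⌉₊ : ℝ) := Nat.le_ceil K₁
        nlinarith [hl2]
      calc b₃ ε = Real.exp (Real.sqrt (A ε * C ε)) := hexpb3 ε
      _ ≤ Real.exp ((⌈K₁⌉₊ : ℝ) * Real.log |b₂ ε|) := Real.exp_le_exp.mpr h1
      _ = |b₂ ε| ^ ⌈K₁⌉₊ := by rw [Real.exp_nat_mul, Real.exp_log hp2]
    show |b₃ ε| ≤ 1 * |b₂ ε| ^ ⌈K₁⌉₊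
    rw [one_mul, abs_of_pos (hb3pos ε)]
    exact hfin
  -- d is b₂-moderate
  have hd2 : d ∈ RMs (AGgen b₂) := by
    refine mem_RMs_iff.mpr ⟨n, 1, one_pos, EvS_of_all fun ε => ?_⟩
    show |d ε| ≤ 1 * |b₂ ε| ^ n
    rw [one_mul]
    exact le_of_eq (abs_of_nonneg (pow_nonneg (abs_nonneg (b₂ ε)) n))
  -- d is not b₃-moderate
  have hd3 : d ∉ RMs (AGgen b₃) := by
    intro hmem
    obtain ⟨m, H, hH, hev⟩ := mem_RMs_iff.mp hmem
    refine hCA ((|Real.log H| + (m : ℝ) + 1) ^ 2) (by positivity) ?_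
    refine EvS_mono (EvS_and hev (hb2 (Real.exp 1))) ?_
    rintro ε ⟨hle, hb2e⟩
    have hp2 : 0 < |b₂ ε| := lt_trans (Real.exp_pos 1) hb2e
    have hK1 : 1 ≤ |Real.log H| + (m : ℝ) + 1 := by
      have := abs_nonneg (Real.log H)
      have := (Nat.cast_nonneg m : (0:ℝ) ≤ (m:ℝ))
      linarith
    have hlogd : (n : ℝ) * Real.log |b₂ ε| ≤
        Real.log H + (m : ℝ) * Real.sqrt (A ε * C ε) := by
      have hd0 : (0 : ℝ) < d ε := pow_pos hp2 n
      have hle' : d ε ≤ H * |b₃ ε| ^ m := le_trans (le_abs_self _) hle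
      have h := Real.log_le_log hd0 hle'
      rw [Real.log_mul (ne_of_gt hH)
        (ne_of_gt (pow_pos (abs_pos.mpr (ne_of_gt (hb3pos ε))) m)),
        abs_of_pos (hb3pos ε), Real.log_pow, Real.log_pow, hlogb3 ε] at h
      exact h
    have hCB : C ε ≤ (|Real.log H| + (m : ℝ) + 1) * Real.sqrt (A ε * C ε) := by
      apply max_le
      · nlinarith [le_abs_self (Real.log H), abs_nonneg (Real.log H), hB1 ε,
          Real.sqrt_nonneg (A ε * C ε), (Nat.cast_nonneg m : (0:ℝ) ≤ (m:ℝ))]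
      · calc A ε ≤ Real.sqrt (A ε * C ε) := hAB ε
        _ ≤ (|Real.log H| + (m : ℝ) + 1) * Real.sqrt (A ε * C ε) :=
          le_mul_of_one_le_left (Real.sqrt_nonneg _) hK1
    have h0 : 0 ≤ A ε * C ε := mul_nonneg (hA0 ε).le (hC0 ε).le
    have hsq := Real.sq_sqrt h0
    show C ε ≤ (|Real.log H| + (m : ℝ) + 1) ^ 2 * A ε
    nlinarith [hA0 ε, hC0 ε, Real.sqrt_nonneg (A ε * C ε)]
  exact ⟨b₃, hAG3,
    (Set.ssubset_iff_of_subset h13).mpr ⟨b₃, self_mem_RMs b₃, hb3n1⟩,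
    (Set.ssubset_iff_of_subset h32).mpr ⟨d, hd2, hd3⟩⟩
end

section
/- If ℬ₁, ℬ₂ are principal asymptotic gauges on 𝕀ˢ with ℝ_M(ℬ₁) ⊊ ℝ_M(ℬ₂), then there exists a family (𝒜_i)_{i∈ℤ} of principal asymptotic gauges on 𝕀ˢ such that ℝ_M(𝒜_i) ⊊ ℝ_M(𝒜_{i+1}) for all i∈ℤ, and ℝ_M(ℬ₁) ⊊ ℝ_M(𝒜_i) ⊊ ℝ_M(ℬ₂) for all i∈ℤ. -/
noncomputable section
namespace PChain

def one01 : I01 := ⟨1, one_pos, le_rfl⟩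

theorem evS_of_forall {P : I01 → Prop} (h : ∀ ε, P ε) : EvS P :=
  ⟨one01, fun ε _ => h ε⟩

theorem evS_mono {P Q : I01 → Prop} (h : EvS P) (h2 : ∀ ε, P ε → Q ε) : EvS Q := by
  obtain ⟨a, ha⟩ := h; exact ⟨a, fun ε hε => h2 ε (ha ε hε)⟩

theorem evS_and {P Q : I01 → Prop} (hP : EvS P) (hQ : EvS Q) :
    EvS fun ε => P ε ∧ Q ε := by
  obtain ⟨a, ha⟩ := hP
  obtain ⟨b, hb⟩ := hQ
  exact ⟨⟨min a.1 b.1, lt_min a.2.1 b.2.1, le_trans (min_le_left _ _) a.2.2⟩,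
    fun ε hε => ⟨ha ε (le_trans hε (min_le_left _ _)), hb ε (le_trans hε (min_le_right _ _))⟩⟩

def ModC (w : I01 → ℝ) : Set (I01 → ℝ) :=
  {x | ∃ m : ℕ, ∃ H : ℝ, 0 < H ∧ EvS fun ε => |x ε| ≤ H * Real.exp (m * w ε)}

theorem rms_aggen_exp (w : I01 → ℝ) :
    RMs (AGgen fun ε => Real.exp (w ε)) = ModC w := by
  have key : ∀ (m : ℕ) (ε : I01), |Real.exp (w ε) ^ m| = Real.exp (m * w ε) := fun m ε => by
    rw [abs_of_pos (pow_pos (Real.exp_pos _) m), Real.exp_nat_mul]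
  ext x
  constructor
  · rintro ⟨g, ⟨m, rfl⟩, H, hH, hev⟩
    refine ⟨m, H, hH, evS_mono hev fun ε h => ?_⟩
    rw [← key m ε]; exact h
  · rintro ⟨m, H, hH, hev⟩
    refine ⟨_, ⟨m, rfl⟩, H, hH, evS_mono hev fun ε h => ?_⟩
    show |x ε| ≤ H * |Real.exp (w ε) ^ m|
    rw [key m ε]; exact h

theorem modC_mono (n : ℕ) {w w' : I01 → ℝ}
    (h : EvS fun ε => w' ε ≤ n * w ε) : ModC w' ⊆ ModC w := by
  rintro x ⟨m, H, hH, hev⟩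
  refine ⟨m * n, H, hH, evS_mono (evS_and hev h) fun ε hh => ?_⟩
  obtain ⟨h1, h2⟩ := hh
  refine h1.trans (mul_le_mul_of_nonneg_left (Real.exp_le_exp.2 ?_) hH.le)
  push_cast
  calc (m:ℝ) * w' ε ≤ m * (n * w ε) :=
        mul_le_mul_of_nonneg_left h2 (Nat.cast_nonneg m)
    _ = (m * n) * w ε := by ring

def wfun (u v : I01 → ℝ) (t : ℝ) : I01 → ℝ := fun ε => u ε ^ (1 - t) * v ε ^ t

variable {u v : I01 → ℝ}

theorem wfun_zero : wfun u v 0 = u := by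
  funext ε; simp [wfun]

theorem wfun_one (hu : ∀ ε, 1 ≤ u ε) : wfun u v 1 = v := by
  funext ε
  have : (0:ℝ) < u ε := one_pos.trans_le (hu ε)
  simp [wfun]

theorem wfun_one_le (hu : ∀ ε, 1 ≤ u ε) (huv : ∀ ε, u ε ≤ v ε)
    {t : ℝ} (ht0 : 0 ≤ t) (ht1 : t ≤ 1) (ε : I01) : 1 ≤ wfun u v t ε := by
  show (1:ℝ) ≤ u ε ^ (1 - t) * v ε ^ t
  have h1 : (1:ℝ) ≤ u ε ^ (1 - t) := by
    have := Real.rpow_le_rpow_of_exponent_le (hu ε) (by linarith : (0:ℝ) ≤ 1 - t)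
    rwa [Real.rpow_zero] at this
  have h2 : (1:ℝ) ≤ v ε ^ t := by
    have := Real.rpow_le_rpow_of_exponent_le ((hu ε).trans (huv ε)) ht0
    rwa [Real.rpow_zero] at this
  nlinarith

theorem wfun_mono (hu : ∀ ε, 1 ≤ u ε) (huv : ∀ ε, u ε ≤ v ε)
    {t s : ℝ} (hts : t ≤ s) (ε : I01) : wfun u v t ε ≤ wfun u v s ε := by
  have hu0 : (0:ℝ) < u ε := one_pos.trans_le (hu ε)
  have hv0 : (0:ℝ) < v ε := hu0.trans_le (huv ε)
  have key : u ε ^ (s - t) ≤ v ε ^ (s - t) :=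
    Real.rpow_le_rpow hu0.le (huv ε) (by linarith)
  have e1 : u ε ^ (1 - t) = u ε ^ (1 - s) * u ε ^ (s - t) := by
    rw [show (1:ℝ) - t = (1 - s) + (s - t) by ring, Real.rpow_add hu0]
  have e2 : v ε ^ s = v ε ^ t * v ε ^ (s - t) := by
    rw [show s = t + (s - t) by ring]
    rw [Real.rpow_add hv0]
    ring_nf
  show u ε ^ (1 - t) * v ε ^ t ≤ u ε ^ (1 - s) * v ε ^ s
  have h3 : (0:ℝ) ≤ u ε ^ (1 - s) := (Real.rpow_pos_of_pos hu0 _).le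
  have h4 : (0:ℝ) ≤ v ε ^ t := (Real.rpow_pos_of_pos hv0 _).le
  calc u ε ^ (1 - t) * v ε ^ t = (u ε ^ (1 - s) * u ε ^ (s - t)) * v ε ^ t := by rw [e1]
    _ ≤ (u ε ^ (1 - s) * v ε ^ (s - t)) * v ε ^ t :=
        mul_le_mul_of_nonneg_right (mul_le_mul_of_nonneg_left key h3) h4
    _ = u ε ^ (1 - s) * v ε ^ s := by rw [e2]; ring

theorem wfun_lower (hu : ∀ ε, 1 ≤ u ε) (huv : ∀ ε, u ε ≤ v ε)
    {t s M : ℝ} (hts : t < s) (hM : 0 ≤ M) {ε : I01} (hε : M * u ε ≤ v ε) :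
    M ^ (s - t) * wfun u v t ε ≤ wfun u v s ε := by
  have hu0 : (0:ℝ) < u ε := one_pos.trans_le (hu ε)
  have hv0 : (0:ℝ) < v ε := hu0.trans_le (huv ε)
  have hst : (0:ℝ) ≤ s - t := by linarith
  have key : (M * u ε) ^ (s - t) ≤ v ε ^ (s - t) :=
    Real.rpow_le_rpow (mul_nonneg hM hu0.le) hε hst
  rw [Real.mul_rpow hM hu0.le] at key
  have e1 : u ε ^ (1 - t) = u ε ^ (1 - s) * u ε ^ (s - t) := by
    rw [show (1:ℝ) - t = (1 - s) + (s - t) by ring, Real.rpow_add hu0]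
  have e2 : v ε ^ s = v ε ^ t * v ε ^ (s - t) := by
    rw [show s = t + (s - t) by ring]
    rw [Real.rpow_add hv0]
    ring_nf
  show M ^ (s - t) * (u ε ^ (1 - t) * v ε ^ t) ≤ u ε ^ (1 - s) * v ε ^ s
  have h3 : (0:ℝ) ≤ u ε ^ (1 - s) := (Real.rpow_pos_of_pos hu0 _).le
  have h4 : (0:ℝ) ≤ v ε ^ t := (Real.rpow_pos_of_pos hv0 _).le
  calc M ^ (s - t) * (u ε ^ (1 - t) * v ε ^ t)
      = (u ε ^ (1 - s) * v ε ^ t) * (M ^ (s - t) * u ε ^ (s - t)) := by rw [e1]; ring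
    _ ≤ (u ε ^ (1 - s) * v ε ^ t) * v ε ^ (s - t) :=
        mul_le_mul_of_nonneg_left key (mul_nonneg h3 h4)
    _ = u ε ^ (1 - s) * v ε ^ s := by rw [e2]; ring

theorem exp_wfun_mem (w : I01 → ℝ) : (fun ε => Real.exp (w ε)) ∈ ModC w := by
  refine ⟨1, 1, one_pos, evS_of_forall fun ε => ?_⟩
  simp [Real.abs_exp]

theorem exp_wfun_notMem (hu : ∀ ε, 1 ≤ u ε) (huv : ∀ ε, u ε ≤ v ε)
    (hfreq : ∀ M : ℝ, ∀ ε₀ : I01, ∃ ε : I01, ε.1 ≤ ε₀.1 ∧ M * u ε ≤ v ε)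
    {t s : ℝ} (ht0 : 0 ≤ t) (hts : t < s) (ht1 : t ≤ 1) :
    (fun ε => Real.exp (wfun u v s ε)) ∉ ModC (wfun u v t) := by
  rintro ⟨m, H, hH, ε₀, hev⟩
  set K : ℝ := |Real.log H| + m + 1 with hK
  have hm0 : (0:ℝ) ≤ m := Nat.cast_nonneg m
  have habs : (0:ℝ) ≤ |Real.log H| := abs_nonneg _
  have hK1 : (1:ℝ) ≤ K := by
    have := abs_nonneg (Real.log H); linarith
  set M : ℝ := (2 * K) ^ (s - t)⁻¹ with hM
  have h2K : (0:ℝ) ≤ 2 * K := by linarith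
  have hM0 : 0 ≤ M := Real.rpow_nonneg h2K _
  have hMst : M ^ (s - t) = 2 * K := by
    rw [hM, ← Real.rpow_mul h2K, inv_mul_cancel₀ (sub_pos.mpr hts).ne', Real.rpow_one]
  obtain ⟨ε, hεle, hMε⟩ := hfreq M ε₀
  have hP : 1 ≤ wfun u v t ε := wfun_one_le hu huv ht0 ht1 ε
  have hlow : M ^ (s - t) * wfun u v t ε ≤ wfun u v s ε := wfun_lower hu huv hts hM0 hMε
  rw [hMst] at hlow
  have h : |Real.exp (wfun u v s ε)| ≤ H * Real.exp (m * wfun u v t ε) := hev ε hεle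
  rw [abs_of_pos (Real.exp_pos _)] at h
  rw [show H * Real.exp (m * wfun u v t ε) = Real.exp (Real.log H + m * wfun u v t ε) by
    rw [Real.exp_add, Real.exp_log hH]] at h
  have hle := Real.exp_le_exp.1 h
  set P := wfun u v t ε
  have h1 : Real.log H ≤ |Real.log H| := le_abs_self _
  have hKP : K ≤ K * P := le_mul_of_one_le_right (by linarith) hP
  have hmP : ((m:ℝ) + 1) * P ≤ K * P :=
    mul_le_mul_of_nonneg_right (by linarith) (by linarith)
  nlinarith

theorem modC_ssubset (hu : ∀ ε, 1 ≤ u ε) (huv : ∀ ε, u ε ≤ v ε)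
    (hfreq : ∀ M : ℝ, ∀ ε₀ : I01, ∃ ε : I01, ε.1 ≤ ε₀.1 ∧ M * u ε ≤ v ε)
    {t s : ℝ} (ht0 : 0 ≤ t) (hts : t < s) (hs1 : s ≤ 1) :
    ModC (wfun u v t) ⊂ ModC (wfun u v s) := by
  rw [ssubset_iff_subset_not_subset]
  constructor
  · refine modC_mono 1 (evS_of_forall fun ε => ?_)
    rw [Nat.cast_one, one_mul]
    exact wfun_mono hu huv hts.le ε
  · intro hsub'
    exact exp_wfun_notMem hu huv hfreq ht0 hts (hts.le.trans hs1) (hsub' (exp_wfun_mem _))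

theorem gen_unbounded {B : Set (I01 → ℝ)} {b : I01 → ℝ}
    (hAG : IsAGs B) (hRM : RMs (AGgen b) = RMs B) (M : ℝ) :
    EvS fun ε => M < |b ε| := by
  obtain ⟨i, hiB, hi⟩ := hAG.1
  have hiRM : i ∈ RMs (AGgen b) := by
    rw [hRM]
    exact ⟨i, hiB, 1, one_pos, evS_of_forall fun ε => by simp⟩
  obtain ⟨g, ⟨m, rfl⟩, H, hH, hev⟩ := hiRM
  cases m with
  | zero =>
    exfalso
    obtain ⟨ε₀, h12⟩ := evS_and hev (hi H)
    obtain ⟨ha, hb'⟩ := h12 ε₀ le_rfl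
    have ha' : |i ε₀| ≤ H := by simpa using ha
    linarith [le_abs_self (i ε₀)]
  | succ n =>
    set M' := max M 0 with hM'
    have hM'0 : (0:ℝ) ≤ M' := le_max_right _ _
    refine evS_mono (evS_and hev (hi (H * (M' + 1) ^ (n + 1)))) fun ε hh => ?_
    obtain ⟨ha, hb'⟩ := hh
    by_contra hc
    push_neg at hc
    have hb'' : |b ε| ≤ M' + 1 := le_trans hc (by have := le_max_left M 0; linarith)
    have hpow : |b ε ^ (n + 1)| ≤ (M' + 1) ^ (n + 1) := by
      rw [abs_pow]
      exact pow_le_pow_left₀ (abs_nonneg _) hb'' _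
    have ha' : |i ε| ≤ H * |b ε ^ (n + 1)| := ha
    have := mul_le_mul_of_nonneg_left hpow hH.le
    linarith [le_abs_self (i ε)]

theorem rms_aggen_eq {b : I01 → ℝ} (hb : ∀ M, EvS fun ε => M < |b ε|) :
    RMs (AGgen b) = ModC (fun ε => Real.log (|b ε| + Real.exp 1)) := by
  have hpos : ∀ ε : I01, (0:ℝ) < |b ε| + Real.exp 1 := fun ε => by positivity
  have hexp : ∀ (m : ℕ) (ε : I01),
      Real.exp (m * Real.log (|b ε| + Real.exp 1)) = (|b ε| + Real.exp 1) ^ m :=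
    fun m ε => by rw [Real.exp_nat_mul, Real.exp_log (hpos ε)]
  ext x
  constructor
  · rintro ⟨g, ⟨m, rfl⟩, H, hH, hev⟩
    refine ⟨m, H, hH, evS_mono hev fun ε h => ?_⟩
    have hb' : |b ε ^ m| ≤ (|b ε| + Real.exp 1) ^ m := by
      rw [abs_pow]
      exact pow_le_pow_left₀ (abs_nonneg _) (by linarith [Real.exp_pos 1]) m
    calc |x ε| ≤ H * |b ε ^ m| := h
      _ ≤ H * (|b ε| + Real.exp 1) ^ m := mul_le_mul_of_nonneg_left hb' hH.le
      _ = H * Real.exp (m * Real.log (|b ε| + Real.exp 1)) := by rw [hexp]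
  · rintro ⟨m, H, hH, hev⟩
    refine ⟨fun ε => b ε ^ m, ⟨m, rfl⟩, H * 2 ^ m, by positivity, ?_⟩
    refine evS_mono (evS_and hev (hb (Real.exp 1))) fun ε hh => ?_
    obtain ⟨h1, h2⟩ := hh
    have hkey : (|b ε| + Real.exp 1) ^ m ≤ 2 ^ m * |b ε| ^ m := by
      rw [← mul_pow]
      exact pow_le_pow_left₀ (hpos ε).le (by linarith) m
    rw [hexp] at h1
    calc |x ε| ≤ H * (|b ε| + Real.exp 1) ^ m := h1
      _ ≤ H * (2 ^ m * |b ε| ^ m) := mul_le_mul_of_nonneg_left hkey hH.le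
      _ = (H * 2 ^ m) * |b ε ^ m| := by rw [abs_pow]; ring

theorem principal_AGgen {c : I01 → ℝ} (hc1 : ∀ ε, 1 ≤ c ε) (hcInf : LimTopS c) :
    Principal (AGgen c) := by
  have hc0 : ∀ ε, (0:ℝ) < c ε := fun ε => one_pos.trans_le (hc1 ε)
  have hcself : c ∈ AGgen c := ⟨1, by funext ε; rw [pow_one]⟩
  constructor
  · refine ⟨⟨c, hcself, hcInf⟩, ?_, ?_, ?_⟩
    · rintro i ⟨m, rfl⟩ j ⟨n, rfl⟩
      refine ⟨fun ε => c ε ^ (m + n), ⟨m + n, rfl⟩, 1, one_pos, evS_of_forall fun ε => ?_⟩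
      show |c ε ^ m * c ε ^ n| ≤ 1 * |c ε ^ (m + n)|
      rw [one_mul, ← pow_add]
    · rintro i ⟨m, rfl⟩ r
      refine ⟨fun ε => c ε ^ m, ⟨m, rfl⟩, |r| + 1, by positivity, evS_of_forall fun ε => ?_⟩
      show |r * c ε ^ m| ≤ (|r| + 1) * |c ε ^ m|
      rw [abs_mul]
      exact mul_le_mul_of_nonneg_right (by linarith [abs_nonneg r]) (abs_nonneg _)
    · rintro i ⟨m, rfl⟩ j ⟨n, rfl⟩
      refine ⟨fun ε => c ε ^ (m + n), ⟨m + n, rfl⟩,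
        evS_of_forall fun ε => pow_pos (hc0 ε) _, 2, two_pos, evS_of_forall fun ε => ?_⟩
      show |(|c ε ^ m| + |c ε ^ n|)| ≤ 2 * |c ε ^ (m + n)|
      have h0 : ∀ k : ℕ, (0:ℝ) ≤ c ε ^ k := fun k => (pow_pos (hc0 ε) k).le
      rw [abs_of_nonneg (h0 m), abs_of_nonneg (h0 n),
        abs_of_nonneg (add_nonneg (h0 m) (h0 n)), abs_of_nonneg (h0 (m + n))]
      have hm : c ε ^ m ≤ c ε ^ (m + n) := pow_le_pow_right₀ (hc1 ε) (Nat.le_add_right _ _)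
      have hn : c ε ^ n ≤ c ε ^ (m + n) := pow_le_pow_right₀ (hc1 ε) (Nat.le_add_left _ _)
      linarith
  · exact ⟨c, hcself, rfl⟩

end PChain
end

/-- Between the moderate classes of two principal AGs on `𝕀ˢ` there is a
`ℤ`-indexed strictly increasing chain of principal AGs. -/
theorem principal_chain (B₁ B₂ : Set (I01 → ℝ))
    (h1 : Principal B₁) (h2 : Principal B₂)
    (hsub : RMs B₁ ⊂ RMs B₂) :
    ∃ A : ℤ → Set (I01 → ℝ),
      (∀ i : ℤ, Principal (A i)) ∧
      (∀ i : ℤ, RMs (A i) ⊂ RMs (A (i + 1))) ∧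
      (∀ i : ℤ, RMs B₁ ⊂ RMs (A i) ∧ RMs (A i) ⊂ RMs B₂) := by
  obtain ⟨hsub1, hsub2⟩ := ssubset_iff_subset_not_subset.1 hsub
  obtain ⟨hAG1, b₁, hb₁B, hRM1⟩ := h1
  obtain ⟨hAG2, b₂, hb₂B, hRM2⟩ := h2
  have hb1Inf := PChain.gen_unbounded hAG1 hRM1
  have hb2Inf := PChain.gen_unbounded hAG2 hRM2
  set u : I01 → ℝ := fun ε => Real.log (|b₁ ε| + Real.exp 1) with hudef
  set v₂ : I01 → ℝ := fun ε => Real.log (|b₂ ε| + Real.exp 1) with hv2def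
  set v : I01 → ℝ := fun ε => u ε + v₂ ε with hvdef
  have hlog1 : ∀ (b : I01 → ℝ) (ε : I01), (1:ℝ) ≤ Real.log (|b ε| + Real.exp 1) := by
    intro b ε
    rw [Real.le_log_iff_exp_le (by positivity)]
    linarith [abs_nonneg (b ε)]
  have hu : ∀ ε, 1 ≤ u ε := hlog1 b₁
  have hv₂ : ∀ ε, 1 ≤ v₂ ε := hlog1 b₂
  have huv : ∀ ε, u ε ≤ v ε := fun ε => by
    show u ε ≤ u ε + v₂ ε
    linarith [hv₂ ε]
  have hBu : RMs B₁ = PChain.ModC u := by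
    rw [← hRM1, PChain.rms_aggen_eq hb1Inf]
  have hBv₂ : RMs B₂ = PChain.ModC v₂ := by
    rw [← hRM2, PChain.rms_aggen_eq hb2Inf]
  -- b₁ belongs to RMs B₂, hence its log is dominated by v₂
  have hb₁mem : b₁ ∈ RMs B₂ := by
    refine hsub1 ?_
    rw [← hRM1]
    exact ⟨b₁, ⟨1, by funext ε; rw [pow_one]⟩, 1, one_pos,
      PChain.evS_of_forall fun ε => by simp⟩
  have hb₁v₂ : b₁ ∈ PChain.ModC v₂ := hBv₂ ▸ hb₁mem
  obtain ⟨k, H, hH, hev⟩ := hb₁v₂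
  have hBveq : PChain.ModC v₂ = PChain.ModC v := by
    apply Set.Subset.antisymm
    · refine PChain.modC_mono 1 (PChain.evS_of_forall fun ε => ?_)
      rw [Nat.cast_one, one_mul]
      show v₂ ε ≤ u ε + v₂ ε
      linarith [hu ε]
    · refine PChain.modC_mono (⌈|Real.log (H + Real.exp 1)| + (k:ℝ)⌉₊ + 1)
        (PChain.evS_mono hev fun ε h => ?_)
    -- h : |b₁ ε| ≤ H * exp (k * v₂ ε)
      have hkv : (0:ℝ) ≤ k * v₂ ε := mul_nonneg (Nat.cast_nonneg k) (by linarith [hv₂ ε])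
      have hexp1 : (1:ℝ) ≤ Real.exp ((k:ℝ) * v₂ ε) := by
        rw [← Real.exp_zero]
        exact Real.exp_le_exp.2 hkv
      have e1 : (0:ℝ) < H + Real.exp 1 := by positivity
      have h2 : |b₁ ε| + Real.exp 1 ≤ (H + Real.exp 1) * Real.exp ((k:ℝ) * v₂ ε) := by
        nlinarith [h, mul_nonneg (Real.exp_pos 1).le (sub_nonneg.2 hexp1)]
      have h3 : u ε ≤ Real.log (H + Real.exp 1) + (k:ℝ) * v₂ ε := by
        have hlog := Real.log_le_log (by positivity : (0:ℝ) < |b₁ ε| + Real.exp 1) h2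
        rwa [Real.log_mul e1.ne' (Real.exp_ne_zero _), Real.log_exp] at hlog
      have hA : Real.log (H + Real.exp 1) ≤ |Real.log (H + Real.exp 1)| * v₂ ε :=
        le_trans (le_abs_self _) (le_mul_of_one_le_right (abs_nonneg _) (hv₂ ε))
      have hC : |Real.log (H + Real.exp 1)| + (k:ℝ) + 1
          ≤ ((⌈|Real.log (H + Real.exp 1)| + (k:ℝ)⌉₊ + 1 : ℕ) : ℝ) := by
        push_cast
        linarith [Nat.le_ceil (|Real.log (H + Real.exp 1)| + (k:ℝ))]
      have hv₂0 : (0:ℝ) ≤ v₂ ε := by linarith [hv₂ ε]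
      calc v ε = u ε + v₂ ε := rfl
        _ ≤ (Real.log (H + Real.exp 1) + (k:ℝ) * v₂ ε) + v₂ ε := by linarith
        _ ≤ (|Real.log (H + Real.exp 1)| + (k:ℝ) + 1) * v₂ ε := by nlinarith
        _ ≤ ((⌈|Real.log (H + Real.exp 1)| + (k:ℝ)⌉₊ + 1 : ℕ) : ℝ) * v₂ ε :=
            mul_le_mul_of_nonneg_right hC hv₂0
  have hBv : RMs B₂ = PChain.ModC v := hBv₂.trans hBveq
  -- frequently v ≥ M u
  have hfreq : ∀ M : ℝ, ∀ ε₀ : I01, ∃ ε : I01, ε.1 ≤ ε₀.1 ∧ M * u ε ≤ v ε := by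
    by_contra hc
    push_neg at hc
    obtain ⟨M, ε₀, hM⟩ := hc
    have hVU : PChain.ModC v ⊆ PChain.ModC u := by
      refine PChain.modC_mono ⌈M⌉₊ ⟨ε₀, fun ε hε => ?_⟩
      have hn1 := hM ε hε
      have hn2 : M * u ε ≤ (⌈M⌉₊ : ℝ) * u ε :=
        mul_le_mul_of_nonneg_right (Nat.le_ceil M) (by linarith [hu ε])
      linarith
    exact hsub2 (by rw [hBv, hBu]; exact hVU)
  -- interpolation exponents
  set θ : ℤ → ℝ := fun i => 1 / 2 + Real.arctan i / Real.pi with hθdef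
  have hπ := Real.pi_pos
  have hθ01 : ∀ i : ℤ, 0 < θ i ∧ θ i < 1 := by
    intro i
    have ha1 := Real.neg_pi_div_two_lt_arctan (i : ℝ)
    have ha2 := Real.arctan_lt_pi_div_two (i : ℝ)
    have hd1 : -(1 / 2 : ℝ) < Real.arctan i / Real.pi := by
      rw [lt_div_iff₀ hπ]; linarith
    have hd2 : Real.arctan (i : ℝ) / Real.pi < 1 / 2 := by
      rw [div_lt_iff₀ hπ]; linarith
    constructor
    · show 0 < 1 / 2 + Real.arctan (i:ℝ) / Real.pi
      linarith
    · show 1 / 2 + Real.arctan (i:ℝ) / Real.pi < 1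
      linarith
  have hθmono : ∀ i : ℤ, θ i < θ (i + 1) := by
    intro i
    show 1 / 2 + Real.arctan (i:ℝ) / Real.pi < 1 / 2 + Real.arctan ((i+1:ℤ):ℝ) / Real.pi
    have harc : Real.arctan (i:ℝ) < Real.arctan ((i+1:ℤ):ℝ) := by
      apply Real.arctan_strictMono
      push_cast
      linarith
    have hdd : Real.arctan (i:ℝ) / Real.pi < Real.arctan ((i+1:ℤ):ℝ) / Real.pi :=
      div_lt_div_of_pos_right harc hπ
    linarith
  -- ModC at the endpoints
  have hw0 : PChain.ModC (PChain.wfun u v 0) = PChain.ModC u := by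
    rw [PChain.wfun_zero]
  have hw1 : PChain.ModC (PChain.wfun u v 1) = PChain.ModC v := by
    rw [PChain.wfun_one hu]
  refine ⟨fun i => AGgen fun ε => Real.exp (PChain.wfun u v (θ i) ε), ?_, ?_, ?_⟩
  · intro i
    apply PChain.principal_AGgen
    · intro ε
      have hw := PChain.wfun_one_le hu huv (hθ01 i).1.le (hθ01 i).2.le ε
      have := Real.exp_le_exp.2 (show (0:ℝ) ≤ PChain.wfun u v (θ i) ε by linarith)
      rwa [Real.exp_zero] at this
    · intro M
      refine PChain.evS_mono (hb1Inf M) fun ε h => ?_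
      have h0 : u ε ≤ PChain.wfun u v (θ i) ε := by
        have hmono := PChain.wfun_mono hu huv (hθ01 i).1.le ε
        rwa [PChain.wfun_zero] at hmono
      have hexpu : Real.exp (u ε) = |b₁ ε| + Real.exp 1 := Real.exp_log (by positivity)
      have := Real.exp_le_exp.2 h0
      rw [hexpu] at this
      have he1 := Real.exp_pos 1
      linarith
  · intro i
    rw [PChain.rms_aggen_exp, PChain.rms_aggen_exp]
    exact PChain.modC_ssubset hu huv hfreq (hθ01 i).1.le (hθmono i) (hθ01 (i+1)).2.le
  · intro i
    constructor
    · rw [hBu, PChain.rms_aggen_exp, ← hw0]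
      exact PChain.modC_ssubset hu huv hfreq le_rfl (hθ01 i).1 (hθ01 i).2.le
    · rw [hBv, PChain.rms_aggen_exp, ← hw1]
      exact PChain.modC_ssubset hu huv hfreq (hθ01 i).1.le (hθ01 i).2 le_rfl
end

section
/- Let ℬ be an asymptotic gauge on a set of indices 𝕀 and μ:ℝ→ℝ_{≥0} a non-decreasing function with lim_{x→+∞} μ(x) = +∞ and such that for every b∈ℬ there exists c∈ℬ with μ(b_ε)² <_𝕀 μ(c_ε). Then μ(ℬ) := {(μ(H·b_ε))_ε | H∈ℝ_{>0}, b∈ℬ} is an asymptotic gauge on 𝕀. -/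
/-- `μ(ℬ) = {(μ(H · b_ε))_ε ∣ H > 0, b ∈ ℬ}`. -/
def muAG {I : Type} (mu : ℝ → ℝ) (B : Set (I → ℝ)) : Set (I → ℝ) :=
  {g | ∃ H : ℝ, 0 < H ∧ ∃ b ∈ B, g = fun ε => mu (H * b ε)}

section AuxAG

variable {I : Type} {S : SoI I}

lemma evOn_mono {A : Set I} {a : I} {P Q : I → Prop}
    (h : EvSmallOn S A a P) (himp : ∀ ε, P ε → Q ε) : EvSmallOn S A a Q := by
  obtain ⟨e, he, hP⟩ := h
  exact ⟨e, he, fun ε hε => himp ε (hP ε hε)⟩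

lemma evOn_and {A : Set I} {a : I} {P Q : I → Prop} (hA : A ∈ S.sets) (ha : a ∈ A)
    (hP : EvSmallOn S A a P) (hQ : EvSmallOn S A a Q) :
    EvSmallOn S A a (fun ε => P ε ∧ Q ε) := by
  obtain ⟨e₁, ⟨he₁A, he₁a⟩, h₁⟩ := hP
  obtain ⟨e₂, ⟨he₂A, he₂a⟩, h₂⟩ := hQ
  obtain ⟨-, hdir⟩ := S.directed a a A hA ha (S.refl a)
  obtain ⟨d, hdA, hda, ⟨hde₁, -⟩, ⟨hde₂, -⟩⟩ := hdir e₁ e₂ he₁A he₁a he₂A he₂a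
  exact ⟨d, ⟨hdA, hda⟩, fun ε hε =>
    ⟨h₁ ε ⟨hε.1, S.trans _ _ _ hε.2 hde₁⟩, h₂ ε ⟨hε.1, S.trans _ _ _ hε.2 hde₂⟩⟩⟩

lemma evOn_restrict {A A' : Set I} {a : I} {P : I → Prop} (hA' : A' ∈ S.sets)
    (hsub : A' ⊆ A) (ha : a ∈ A') (h : EvSmallOn S A a P) : EvSmallOn S A' a P := by
  obtain ⟨e, ⟨heA, hea⟩, hP⟩ := h
  obtain ⟨⟨x, hxA', hxe⟩, -⟩ := S.directed e a A' hA' ha hea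
  exact ⟨x, ⟨hxA', S.trans _ _ _ hxe hea⟩,
    fun ε hε => hP ε ⟨hsub hε.1, S.trans _ _ _ hε.2 hxe⟩⟩

lemma bigO_restrict {x y : I → ℝ} {A A' : Set I} (hA' : A' ∈ S.sets) (hsub : A' ⊆ A)
    (h : ∀ a ∈ A, BigOOn S A a x y) {a : I} (ha : a ∈ A') :
    ∃ H : ℝ, 0 < H ∧ EvSmallOn S A' a (fun ε => |x ε| ≤ H * |y ε|) := by
  obtain ⟨H, hH, ε₀, ⟨hε₀A, hε₀a⟩, hb⟩ := h a (hsub ha)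
  refine ⟨H, hH, ?_⟩
  obtain ⟨⟨z, hzA', hze⟩, -⟩ := S.directed ε₀ a A' hA' ha hε₀a
  exact ⟨z, ⟨hzA', S.trans _ _ _ hze hε₀a⟩,
    fun ε hε => hb ε ⟨hsub hε.1, S.trans _ _ _ hε.2 hze⟩⟩

lemma limTop_restrict {i : I → ℝ} {A A' : Set I} (hA' : A' ∈ S.sets) (hsub : A' ⊆ A)
    (h : ∀ a ∈ A, ∀ M : ℝ, ∃ e, S.le e a ∧ ∀ ε ∈ A, S.le ε e → M < i ε)
    {a : I} (ha : a ∈ A') (M : ℝ) : EvSmallOn S A' a (fun ε => M < i ε) := by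
  obtain ⟨e, hea, he⟩ := h a (hsub ha) M
  obtain ⟨⟨z, hzA', hze⟩, -⟩ := S.directed e a A' hA' ha hea
  exact ⟨z, ⟨hzA', S.trans _ _ _ hze hea⟩,
    fun ε hε => he ε (hsub hε.1) (S.trans _ _ _ hε.2 hze)⟩

lemma evSmall_mono {P Q : I → Prop} (h : EvSmall S P) (himp : ∀ ε, P ε → Q ε) :
    EvSmall S Q := by
  obtain ⟨A, hA, hall⟩ := h
  exact ⟨A, hA, fun a ha => evOn_mono (hall a ha) himp⟩

lemma evSmall_to_bigO {x y : I → ℝ} {H : ℝ} (hH : 0 < H)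
    (h : EvSmall S (fun ε => |x ε| ≤ H * |y ε|)) : BigO S x y := by
  obtain ⟨A, hA, hall⟩ := h
  refine ⟨A, hA, fun a ha => ?_⟩
  obtain ⟨e, he, hb⟩ := hall a ha
  exact ⟨H, hH, e, he, hb⟩

lemma muAG_arith (mu : ℝ → ℝ) (h0 : ∀ x, 0 ≤ mu x) (hmono : Monotone mu)
    {x₀ : ℝ} (hx₀ : ∀ x ≥ x₀, 1 ≤ mu x)
    {H K K₁ K₂ K₃ : ℝ} (hH : 0 < H) (hK : 0 < K) (hK₁ : 0 < K₁) (hK₂ : 0 < K₂)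
    (hK₃ : 0 < K₃) {bb cc ss pp ii tt c1 : ℝ}
    (h1 : |(|bb| + |cc|)| ≤ K₁ * |ss|) (h2 : 0 < ss)
    (h3 : |ii * ss| ≤ K₂ * |pp|)
    (h4 : |(|pp| + |ii|)| ≤ K₃ * |tt|) (h5 : 0 < tt)
    (h6 : (mu tt) ^ 2 < mu c1)
    (h7 : max 1 (max (max H K * (K₁ * (K₂ * K₃))) (K₃ * (|x₀| + 1))) < ii) :
    mu (H * bb) * mu (K * cc) ≤ mu (1 * c1) ∧
    mu (H * bb) + mu (K * cc) ≤ 2 * mu (1 * c1) ∧ 0 < mu (1 * c1) := by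
  have hii1 : 1 < ii := lt_of_le_of_lt (le_max_left _ _) h7
  have hiiM : max H K * (K₁ * (K₂ * K₃)) < ii :=
    lt_of_le_of_lt ((le_max_left _ _).trans (le_max_right _ _)) h7
  have hiix : K₃ * (|x₀| + 1) < ii :=
    lt_of_le_of_lt ((le_max_right _ _).trans (le_max_right _ _)) h7
  have hiipos : 0 < ii := lt_trans one_pos hii1
  have habs_s : |ss| = ss := abs_of_pos h2
  have habs_t : |tt| = tt := abs_of_pos h5
  have hbcnn : 0 ≤ |bb| + |cc| := by positivity
  have hbc : |bb| + |cc| ≤ K₁ * ss := by rwa [abs_of_nonneg hbcnn, habs_s] at h1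
  have hiiss : ii * ss ≤ K₂ * |pp| := (le_abs_self _).trans h3
  have hpt : |pp| + |ii| ≤ K₃ * tt := by
    rwa [abs_of_nonneg (by positivity), habs_t] at h4
  have hpp : |pp| ≤ K₃ * tt := by have := abs_nonneg ii; linarith
  have hiiK : ii * ss ≤ K₂ * (K₃ * tt) := hiiss.trans (by nlinarith)
  have hM : 0 < max H K := lt_of_lt_of_le hH (le_max_left _ _)
  -- M * K₁ * ss ≤ tt
  have t1 : (max H K * K₁) * (ii * ss) ≤ (max H K * K₁) * (K₂ * (K₃ * tt)) :=
    mul_le_mul_of_nonneg_left hiiK (by positivity)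
  have t2 : (max H K * (K₁ * (K₂ * K₃))) * tt < ii * tt :=
    mul_lt_mul_of_pos_right hiiM h5
  have hkey : max H K * (K₁ * ss) ≤ tt := by nlinarith [mul_pos hM hK₁, hiipos]
  have hstep : max H K * (|bb| + |cc|) ≤ tt :=
    (mul_le_mul_of_nonneg_left hbc hM.le).trans (le_of_eq_of_le (by ring) hkey)
  have hHbb : H * bb ≤ tt := by
    refine le_trans ?_ hstep
    calc H * bb ≤ H * |bb| := mul_le_mul_of_nonneg_left (le_abs_self bb) hH.le
      _ ≤ max H K * (|bb| + |cc|) :=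
        mul_le_mul (le_max_left H K) (le_add_of_nonneg_right (abs_nonneg cc))
          (abs_nonneg bb) hM.le
  have hKcc : K * cc ≤ tt := by
    refine le_trans ?_ hstep
    calc K * cc ≤ K * |cc| := mul_le_mul_of_nonneg_left (le_abs_self cc) hK.le
      _ ≤ max H K * (|bb| + |cc|) :=
        mul_le_mul (le_max_right H K) (le_add_of_nonneg_left (abs_nonneg bb))
          (abs_nonneg cc) hM.le
  have hmuHb : mu (H * bb) ≤ mu tt := hmono hHbb
  have hmuKc : mu (K * cc) ≤ mu tt := hmono hKcc
  have httx : x₀ ≤ tt := by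
    have : ii ≤ K₃ * tt := (le_abs_self _).trans ((le_add_of_nonneg_left (abs_nonneg pp)).trans hpt)
    nlinarith [le_abs_self x₀, abs_nonneg x₀]
  have hmt1 : 1 ≤ mu tt := hx₀ tt httx
  have hmc : mu (1 * c1) = mu c1 := by rw [one_mul]
  have h6' : (mu tt) ^ 2 ≤ mu c1 := le_of_lt h6
  refine ⟨?_, ?_, ?_⟩
  · rw [hmc]
    calc mu (H * bb) * mu (K * cc) ≤ mu tt * mu tt :=
          mul_le_mul hmuHb hmuKc (h0 _) (h0 _)
      _ = (mu tt) ^ 2 := (sq (mu tt)).symm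
      _ ≤ mu c1 := h6'
  · have hq : mu tt ≤ mu tt ^ 2 := by
      have := mul_le_mul_of_nonneg_left hmt1 (h0 tt)
      rw [sq]; linarith
    rw [hmc]; linarith
  · have hq : mu tt ≤ mu tt ^ 2 := by
      have := mul_le_mul_of_nonneg_left hmt1 (h0 tt)
      rw [sq]; linarith
    rw [hmc]; linarith

lemma muAG_master {I : Type} (S : SoI I) (B : Set (I → ℝ)) (hB : IsAG S B)
    (mu : ℝ → ℝ) (h0 : ∀ x, 0 ≤ mu x) (hmono : Monotone mu)
    (htop : Filter.Tendsto mu Filter.atTop Filter.atTop)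
    (hsq : ∀ b ∈ B, ∃ c ∈ B,
      NetGt S (fun ε => mu (c ε)) (fun ε => (mu (b ε)) ^ 2))
    {b c : I → ℝ} (hb : b ∈ B) (hc : c ∈ B) {H K : ℝ} (hH : 0 < H) (hK : 0 < K) :
    ∃ c₁ ∈ B, EvSmall S (fun ε => mu (H * b ε) * mu (K * c ε) ≤ mu (1 * c₁ ε) ∧
      mu (H * b ε) + mu (K * c ε) ≤ 2 * mu (1 * c₁ ε) ∧ 0 < mu (1 * c₁ ε)) := by
  obtain ⟨i₀, hi₀B, A₀, hA₀, hlim⟩ := hB.1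
  obtain ⟨s, hsB, hspos, hsbig⟩ := hB.2.2.2 b hb c hc
  obtain ⟨A₁, hA₁, hs1⟩ := hspos
  obtain ⟨A₂, hA₂, hs2⟩ := hsbig
  obtain ⟨p, hpB, hpbig⟩ := hB.2.1 i₀ hi₀B s hsB
  obtain ⟨A₃, hA₃, hp3⟩ := hpbig
  obtain ⟨t, htB, htpos, htbig⟩ := hB.2.2.2 p hpB i₀ hi₀B
  obtain ⟨A₄, hA₄, ht4⟩ := htpos
  obtain ⟨A₅, hA₅, ht5⟩ := htbig
  obtain ⟨c₁, hc₁B, hc₁gt⟩ := hsq t htB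
  obtain ⟨A₆, hA₆, hc6⟩ := hc₁gt
  obtain ⟨x₀, hx₀⟩ := Filter.eventually_atTop.1 (htop.eventually_ge_atTop 1)
  obtain ⟨C₁, hC₁, hi₁⟩ := S.inter A₀ hA₀ A₁ hA₁
  obtain ⟨C₂, hC₂, hi₂⟩ := S.inter C₁ hC₁ A₂ hA₂
  obtain ⟨C₃, hC₃, hi₃⟩ := S.inter C₂ hC₂ A₃ hA₃
  obtain ⟨C₄, hC₄, hi₄⟩ := S.inter C₃ hC₃ A₄ hA₄
  obtain ⟨C₅, hC₅, hi₅⟩ := S.inter C₄ hC₄ A₅ hA₅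
  obtain ⟨C₆, hC₆, hi₆⟩ := S.inter C₅ hC₅ A₆ hA₆
  have sub5 : C₆ ⊆ C₅ := hi₆.trans Set.inter_subset_left
  have sub4 : C₆ ⊆ C₄ := sub5.trans (hi₅.trans Set.inter_subset_left)
  have sub3 : C₆ ⊆ C₃ := sub4.trans (hi₄.trans Set.inter_subset_left)
  have sub2 : C₆ ⊆ C₂ := sub3.trans (hi₃.trans Set.inter_subset_left)
  have sub1 : C₆ ⊆ C₁ := sub2.trans (hi₂.trans Set.inter_subset_left)
  have subA0 : C₆ ⊆ A₀ := sub1.trans (hi₁.trans Set.inter_subset_left)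
  have subA1 : C₆ ⊆ A₁ := sub1.trans (hi₁.trans Set.inter_subset_right)
  have subA2 : C₆ ⊆ A₂ := sub2.trans (hi₂.trans Set.inter_subset_right)
  have subA3 : C₆ ⊆ A₃ := sub3.trans (hi₃.trans Set.inter_subset_right)
  have subA4 : C₆ ⊆ A₄ := sub4.trans (hi₄.trans Set.inter_subset_right)
  have subA5 : C₆ ⊆ A₅ := sub5.trans (hi₅.trans Set.inter_subset_right)
  have subA6 : C₆ ⊆ A₆ := hi₆.trans Set.inter_subset_right
  refine ⟨c₁, hc₁B, C₆, hC₆, fun a ha => ?_⟩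
  obtain ⟨K₁, hK₁, e1⟩ := bigO_restrict hC₆ subA2 hs2 ha
  have e2 : EvSmallOn S C₆ a (fun ε => 0 < s ε) :=
    evOn_restrict hC₆ subA1 ha (hs1 a (subA1 ha))
  obtain ⟨K₂, hK₂, e3⟩ := bigO_restrict hC₆ subA3 hp3 ha
  have e4 : EvSmallOn S C₆ a (fun ε => 0 < t ε) :=
    evOn_restrict hC₆ subA4 ha (ht4 a (subA4 ha))
  obtain ⟨K₃, hK₃, e5⟩ := bigO_restrict hC₆ subA5 ht5 ha
  have e6 := evOn_restrict hC₆ subA6 ha (hc6 a (subA6 ha))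
  have e7 := limTop_restrict hC₆ subA0 hlim ha
    (max 1 (max (max H K * (K₁ * (K₂ * K₃))) (K₃ * (|x₀| + 1))))
  have hall := evOn_and hC₆ ha e1 (evOn_and hC₆ ha e2 (evOn_and hC₆ ha e3
    (evOn_and hC₆ ha e4 (evOn_and hC₆ ha e5 (evOn_and hC₆ ha e6 e7)))))
  refine evOn_mono hall ?_
  rintro ε ⟨h1, h2, h3, h4, h5, h6, h7⟩
  exact muAG_arith mu h0 hmono hx₀ hH hK hK₁ hK₂ hK₃ h1 h2 h3 h5 h4 h6 h7

end AuxAG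

/-- If `μ : ℝ → ℝ_{≥0}` is non-decreasing, tends to `+∞` at `+∞` and satisfies
`μ(b_ε)² <_𝕀 μ(c_ε)` for suitable `c`, then `μ(ℬ)` is an AG. -/
theorem muAG_isAG {I : Type} (S : SoI I) (B : Set (I → ℝ)) (hB : IsAG S B)
    (mu : ℝ → ℝ) (h0 : ∀ x, 0 ≤ mu x) (hmono : Monotone mu)
    (htop : Filter.Tendsto mu Filter.atTop Filter.atTop)
    (hsq : ∀ b ∈ B, ∃ c ∈ B,
      NetGt S (fun ε => mu (c ε)) (fun ε => (mu (b ε)) ^ 2)) :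
    IsAG S (muAG mu B) := by
  refine ⟨?_, ?_, ?_, ?_⟩
  · -- existence of an element with LimTop
    obtain ⟨i₀, hi₀B, A₀, hA₀, hlim⟩ := hB.1
    refine ⟨fun ε => mu (1 * i₀ ε), ⟨1, one_pos, i₀, hi₀B, rfl⟩, A₀, hA₀,
      fun a ha M => ?_⟩
    obtain ⟨N, hN⟩ := Filter.eventually_atTop.1 (htop.eventually_ge_atTop (M + 1))
    obtain ⟨e, hea, he⟩ := hlim a ha N
    refine ⟨e, hea, fun ε hεA hεe => ?_⟩
    have h1 : M + 1 ≤ mu (1 * i₀ ε) := hN (1 * i₀ ε) (by rw [one_mul]; exact (he ε hεA hεe).le)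
    simp only []
    linarith
  · -- products
    rintro i ⟨H, hH, b, hb, rfl⟩ j ⟨K, hK, c, hc, rfl⟩
    obtain ⟨c₁, hc₁B, hev⟩ := muAG_master S B hB mu h0 hmono htop hsq hb hc hH hK
    refine ⟨fun ε => mu (1 * c₁ ε), ⟨1, one_pos, c₁, hc₁B, rfl⟩,
      evSmall_to_bigO one_pos (evSmall_mono hev ?_)⟩
    rintro ε ⟨hprod, -, -⟩
    have hgoal : |mu (H * b ε) * mu (K * c ε)| ≤ 1 * |mu (1 * c₁ ε)| := by
      rw [abs_of_nonneg (mul_nonneg (h0 _) (h0 _)), abs_of_nonneg (h0 _), one_mul]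
      exact hprod
    exact hgoal
  · -- scalars
    rintro i ⟨H, hH, b, hb, rfl⟩ r
    refine ⟨fun ε => mu (H * b ε), ⟨H, hH, b, hb, rfl⟩, Set.univ, S.univ_mem,
      fun a _ => ⟨|r| + 1, by positivity, a, ⟨trivial, S.refl a⟩, fun ε _ => ?_⟩⟩
    have hgoal : |r * mu (H * b ε)| ≤ (|r| + 1) * |mu (H * b ε)| := by
      rw [abs_mul]
      exact mul_le_mul_of_nonneg_right (by linarith [abs_nonneg r]) (abs_nonneg _)
    exact hgoal
  · -- sums
    rintro i ⟨H, hH, b, hb, rfl⟩ j ⟨K, hK, c, hc, rfl⟩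
    obtain ⟨c₁, hc₁B, hev⟩ := muAG_master S B hB mu h0 hmono htop hsq hb hc hH hK
    refine ⟨fun ε => mu (1 * c₁ ε), ⟨1, one_pos, c₁, hc₁B, rfl⟩,
      evSmall_mono hev (fun ε h => h.2.2), evSmall_to_bigO two_pos (evSmall_mono hev ?_)⟩
    rintro ε ⟨-, hsum, -⟩
    have hgoal : |(|mu (H * b ε)| + |mu (K * c ε)|)| ≤ 2 * |mu (1 * c₁ ε)| := by
      rw [abs_of_nonneg (h0 (H * b ε)), abs_of_nonneg (h0 (K * c ε)),
        abs_of_nonneg (h0 (1 * c₁ ε)),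
        abs_of_nonneg (add_nonneg (h0 (H * b ε)) (h0 (K * c ε)))]
      exact hsum
    exact hgoal
end

section
/- Let ℬ₁, ℬ₂ be asymptotic gauges on the same set of indices 𝕀 and μ:ℝ→ℝ_{≥0} non-decreasing with lim_{x→+∞}μ(x)=+∞ and μ(b)² <_𝕀 μ(c) for some c∈ℬᵢ whenever b∈ℬᵢ. If ℝ_M(ℬ₁) ⊆ ℝ_M(ℬ₂), then ℝ_M(μ(ℬ₁)) ⊆ ℝ_M(μ(ℬ₂)). -/
theorem evso_restrict {I : Type} (S : SoI I) {A C : Set I} (hC : C ∈ S.sets)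
    (hCA : C ⊆ A) {a : I} (ha : a ∈ C) {P : I → Prop} (h : EvSmallOn S A a P) :
    EvSmallOn S C a P := by
  obtain ⟨e, ⟨heA, hea⟩, hP⟩ := h
  obtain ⟨x, hxC, hxe⟩ := (S.directed e a C hC ha hea).1
  exact ⟨x, ⟨hxC, S.trans _ _ _ hxe hea⟩, fun ε hε =>
    hP ε ⟨hCA hε.1, S.trans _ _ _ hε.2 hxe⟩⟩

theorem evso_and {I : Type} (S : SoI I) {C : Set I} (hC : C ∈ S.sets) {a : I}
    (ha : a ∈ C) {P Q : I → Prop} (hP : EvSmallOn S C a P) (hQ : EvSmallOn S C a Q) :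
    EvSmallOn S C a fun ε => P ε ∧ Q ε := by
  obtain ⟨eP, ⟨hePC, hePa⟩, hP⟩ := hP
  obtain ⟨eQ, ⟨heQC, heQa⟩, hQ⟩ := hQ
  obtain ⟨d, hdC, hda, ⟨hdP, _⟩, hdQ, _⟩ :=
    (S.directed a a C hC ha (S.refl a)).2 eP eQ hePC hePa heQC heQa
  exact ⟨d, ⟨hdC, hda⟩, fun ε hε =>
    ⟨hP ε ⟨hε.1, S.trans _ _ _ hε.2 hdP⟩, hQ ε ⟨hε.1, S.trans _ _ _ hε.2 hdQ⟩⟩⟩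

theorem evso_mono {I : Type} (S : SoI I) {C : Set I} {a : I} {P Q : I → Prop}
    (hPQ : ∀ ε, P ε → Q ε) (h : EvSmallOn S C a P) : EvSmallOn S C a Q := by
  obtain ⟨e, he, hP⟩ := h
  exact ⟨e, he, fun ε hε => hPQ ε (hP ε hε)⟩

theorem limtop_evso {I : Type} (S : SoI I) {A : Set I} (hA : A ∈ S.sets) {i : I → ℝ}
    (h : ∀ a ∈ A, ∀ M : ℝ, ∃ e, S.le e a ∧ ∀ ε ∈ A, S.le ε e → M < i ε)
    {a : I} (ha : a ∈ A) (M : ℝ) : EvSmallOn S A a fun ε => M < i ε := by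
  obtain ⟨e, hea, hM⟩ := h a ha M
  obtain ⟨x, hxA, hxe⟩ := (S.directed e a A hA ha hea).1
  exact ⟨x, ⟨hxA, S.trans _ _ _ hxe hea⟩, fun ε hε =>
    hM ε hε.1 (S.trans _ _ _ hε.2 hxe)⟩

theorem bigO_self {I : Type} (S : SoI I) (b : I → ℝ) : BigO S b b :=
  ⟨Set.univ, S.univ_mem, fun a _ => ⟨1, one_pos, a, ⟨trivial, S.refl a⟩,
    fun ε _ => le_of_eq (one_mul _).symm⟩⟩

/-- If `ℝ_M(ℬ₁) ⊆ ℝ_M(ℬ₂)` then `ℝ_M(μ(ℬ₁)) ⊆ ℝ_M(μ(ℬ₂))`. -/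
theorem RM_muAG_mono {I : Type} (S : SoI I) (B₁ B₂ : Set (I → ℝ))
    (hB₁ : IsAG S B₁) (hB₂ : IsAG S B₂)
    (mu : ℝ → ℝ) (h0 : ∀ x, 0 ≤ mu x) (hmono : Monotone mu)
    (htop : Filter.Tendsto mu Filter.atTop Filter.atTop)
    (hsq₁ : ∀ b ∈ B₁, ∃ c ∈ B₁,
      NetGt S (fun ε => mu (c ε)) (fun ε => (mu (b ε)) ^ 2))
    (hsq₂ : ∀ b ∈ B₂, ∃ c ∈ B₂,
      NetGt S (fun ε => mu (c ε)) (fun ε => (mu (b ε)) ^ 2))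
    (hsub : RM S B₁ ⊆ RM S B₂) :
    RM S (muAG mu B₁) ⊆ RM S (muAG mu B₂) := by
  intro x hx
  obtain ⟨g, ⟨H, hH, b, hb, rfl⟩, A0, hA0, hx0⟩ := hx
  -- b is moderate w.r.t. B₂
  obtain ⟨c, hc, Ab, hAb, hbc⟩ := hsub ⟨b, hb, bigO_self S b⟩
  obtain ⟨⟨i, hi, Ai, hAi, hiTop⟩, hmul, _, hsum⟩ := hB₂
  obtain ⟨s, hs, hsgt, As, hAs, hcs⟩ := hsum c hc i hi
  obtain ⟨Asp, hAsp, hspos⟩ := hsgt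
  obtain ⟨p, hp, Ap, hAp, hps⟩ := hmul s hs s hs
  obtain ⟨s₂, hs₂, hs₂gt, As2, hAs2, hs2big⟩ := hsum p hp i hi
  obtain ⟨As2p, hAs2p, hs₂pos⟩ := hs₂gt
  -- common refinement of all index sets
  obtain ⟨C1, hC1, hC1s⟩ := S.inter A0 hA0 Ab hAb
  obtain ⟨C2, hC2, hC2s⟩ := S.inter C1 hC1 Ai hAi
  obtain ⟨C3, hC3, hC3s⟩ := S.inter C2 hC2 As hAs
  obtain ⟨C4, hC4, hC4s⟩ := S.inter C3 hC3 Asp hAsp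
  obtain ⟨C5, hC5, hC5s⟩ := S.inter C4 hC4 Ap hAp
  obtain ⟨C6, hC6, hC6s⟩ := S.inter C5 hC5 As2 hAs2
  obtain ⟨C, hC, hCs⟩ := S.inter C6 hC6 As2p hAs2p
  have hC6' : C ⊆ C6 := fun ε hε => (hCs hε).1
  have hCs2p : C ⊆ As2p := fun ε hε => (hCs hε).2
  have hC5' : C ⊆ C5 := fun ε hε => (hC6s (hC6' hε)).1
  have hCs2 : C ⊆ As2 := fun ε hε => (hC6s (hC6' hε)).2
  have hC4' : C ⊆ C4 := fun ε hε => (hC5s (hC5' hε)).1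
  have hCp : C ⊆ Ap := fun ε hε => (hC5s (hC5' hε)).2
  have hC3' : C ⊆ C3 := fun ε hε => (hC4s (hC4' hε)).1
  have hCsp : C ⊆ Asp := fun ε hε => (hC4s (hC4' hε)).2
  have hC2' : C ⊆ C2 := fun ε hε => (hC3s (hC3' hε)).1
  have hCas : C ⊆ As := fun ε hε => (hC3s (hC3' hε)).2
  have hC1' : C ⊆ C1 := fun ε hε => (hC2s (hC2' hε)).1
  have hCi : C ⊆ Ai := fun ε hε => (hC2s (hC2' hε)).2
  have hCa0 : C ⊆ A0 := fun ε hε => (hC1s (hC1' hε)).1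
  have hCab : C ⊆ Ab := fun ε hε => (hC1s (hC1' hε)).2
  refine ⟨fun ε => mu (1 * s₂ ε), ⟨1, one_pos, s₂, hs₂, rfl⟩, C, hC, ?_⟩
  intro a haC
  -- extract the per-`a` constants
  obtain ⟨L, hL, h1⟩ := hx0 a (hCa0 haC)
  obtain ⟨K, hK, h2⟩ := hbc a (hCab haC)
  obtain ⟨K₃, hK₃, h3⟩ := hcs a (hCas haC)
  obtain ⟨K₅, hK₅, h5⟩ := hps a (hCp haC)
  obtain ⟨K₆, hK₆, h6⟩ := hs2big a (hCs2 haC)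
  set D : ℝ := H * K * K₃ with hD
  set E : ℝ := K₅ * K₆ with hE
  have hDpos : 0 < D := by positivity
  have hEpos : 0 < E := by positivity
  -- combine all eventual statements on C at a
  have e1 : EvSmallOn S C a fun ε => |x ε| ≤ L * |mu (H * b ε)| :=
    evso_restrict S hC hCa0 haC h1
  have e2 : EvSmallOn S C a fun ε => |b ε| ≤ K * |c ε| :=
    evso_restrict S hC hCab haC h2
  have e3 : EvSmallOn S C a fun ε => |(|c ε| + |i ε|)| ≤ K₃ * |s ε| :=
    evso_restrict S hC hCas haC h3
  have e4 : EvSmallOn S C a fun ε => s ε > 0 :=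
    evso_restrict S hC hCsp haC (hspos a (hCsp haC))
  have e5 : EvSmallOn S C a fun ε => |s ε * s ε| ≤ K₅ * |p ε| :=
    evso_restrict S hC hCp haC h5
  have e6 : EvSmallOn S C a fun ε => |(|p ε| + |i ε|)| ≤ K₆ * |s₂ ε| :=
    evso_restrict S hC hCs2 haC h6
  have e7 : EvSmallOn S C a fun ε => s₂ ε > 0 :=
    evso_restrict S hC hCs2p haC (hs₂pos a (hCs2p haC))
  have e8 : EvSmallOn S C a fun ε => K₃ * (D * E + 1) < i ε :=
    evso_restrict S hC hCi haC (limtop_evso S hAi hiTop (hCi haC) _)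
  have eAll := evso_and S hC haC e1 (evso_and S hC haC e2 (evso_and S hC haC e3
    (evso_and S hC haC e4 (evso_and S hC haC e5 (evso_and S hC haC e6
      (evso_and S hC haC e7 e8))))))
  refine ⟨L, hL, ?_⟩
  refine evso_mono S (fun ε hε => ?_) eAll
  obtain ⟨P1, P2, P3, P4, P5, P6, P7, P8⟩ := hε
  -- arithmetic: H * b ε ≤ 1 * s₂ ε
  have habs_s : |s ε| = s ε := abs_of_pos P4
  have habs_s2 : |s₂ ε| = s₂ ε := abs_of_pos P7
  have hci : |c ε| + |i ε| ≤ K₃ * s ε := by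
    rw [← habs_s]; exact le_trans (le_abs_self _) P3
  have hiabs : i ε ≤ |i ε| := le_abs_self _
  have hcabs : (0:ℝ) ≤ |c ε| := abs_nonneg _
  have hsbig : D * E + 1 < s ε := by
    have h' : K₃ * (D * E + 1) < K₃ * s ε := by
      calc K₃ * (D * E + 1) < i ε := P8
        _ ≤ |i ε| := hiabs
        _ ≤ K₃ * s ε := by linarith
    exact lt_of_mul_lt_mul_left h' (le_of_lt hK₃)
  have hpabs : |p ε| ≤ K₆ * s₂ ε := by
    have := le_trans (le_abs_self (|p ε| + |i ε|)) P6
    rw [habs_s2] at this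
    have : |p ε| + |i ε| ≤ K₆ * s₂ ε := this
    have hinn : (0:ℝ) ≤ |i ε| := abs_nonneg _
    linarith
  have hssq : s ε * s ε ≤ E * s₂ ε := by
    calc s ε * s ε ≤ |s ε * s ε| := le_abs_self _
      _ ≤ K₅ * |p ε| := P5
      _ ≤ K₅ * (K₆ * s₂ ε) := by
          exact mul_le_mul_of_nonneg_left hpabs (le_of_lt hK₅)
      _ = E * s₂ ε := by ring
  have hbD : H * b ε ≤ D * s ε := by
    have hb1 : b ε ≤ |b ε| := le_abs_self _
    have hc1 : |c ε| ≤ K₃ * s ε := by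
      have : (0:ℝ) ≤ |i ε| := abs_nonneg _
      linarith
    calc H * b ε ≤ H * |b ε| := mul_le_mul_of_nonneg_left hb1 hH.le
      _ ≤ H * (K * |c ε|) := mul_le_mul_of_nonneg_left P2 hH.le
      _ ≤ H * (K * (K₃ * s ε)) := mul_le_mul_of_nonneg_left
          (mul_le_mul_of_nonneg_left hc1 hK.le) hH.le
      _ = D * s ε := by rw [hD]; ring
  have hDs : D * s ε ≤ s₂ ε := by
    have hs2 : D * E * s ε ≤ s ε * s ε :=
      mul_le_mul_of_nonneg_right (by linarith : D * E ≤ s ε) P4.le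
    have h' : E * (D * s ε) ≤ E * s₂ ε := by
      calc E * (D * s ε) = D * E * s ε := by ring
        _ ≤ s ε * s ε := hs2
        _ ≤ E * s₂ ε := hssq
    exact le_of_mul_le_mul_left h' hEpos
  have hkey : H * b ε ≤ 1 * s₂ ε := by rw [one_mul]; linarith
  have hmu : mu (H * b ε) ≤ mu (1 * s₂ ε) := hmono hkey
  calc |x ε| ≤ L * |mu (H * b ε)| := P1
    _ = L * mu (H * b ε) := by rw [abs_of_nonneg (h0 _)]
    _ ≤ L * mu (1 * s₂ ε) := mul_le_mul_of_nonneg_left hmu hL.le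
    _ = L * |mu (1 * s₂ ε)| := by rw [abs_of_nonneg (h0 _)]
end

section
/- Let b,c:(0,1]→ℝ be nets with lim_{ε→0⁺} b_ε = lim_{ε→0⁺} c_ε = +∞, and suppose η,λ:(0,1]→(0,1] are mutually inverse maps with lim_{ε→0⁺}η(ε)=lim_{ε→0⁺}λ(ε)=0, b_{η(ε)} = O(c_ε) and c_{λ(ε)} = O(b_ε) as ε→0⁺. Then ℝ_M(AG(b)∘η) = ℝ_M(AG(c)) and ℝ_M(AG(c)∘λ) = ℝ_M(AG(b)); in particular AG(b) and AG(c) are isomorphic in AG₁. -/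
/-- The special set of indices `𝕀ˢ = ((0,1], ≤, {(0, ε₀] ∣ ε₀ ∈ (0,1]})`. -/
def Is : SoI I01 where
  le a b := a.1 ≤ b.1
  refl _ := le_refl _
  trans _ _ _ h1 h2 := le_trans h1 h2
  sets := {S | ∃ e : I01, S = {ε : I01 | ε.1 ≤ e.1}}
  empty_not_mem := by
    rintro ⟨e, he⟩
    have : e ∈ ({ε : I01 | ε.1 ≤ e.1}) := by exact le_refl e.1
    rw [← he] at this
    exact this
  univ_mem := ⟨⟨1, by norm_num⟩, by
    ext ε
    simp only [Set.mem_univ, Set.mem_setOf_eq, true_iff]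
    exact ε.2.2⟩
  inter := by
    rintro A ⟨e1, rfl⟩ B ⟨e2, rfl⟩
    rcases le_total e1.1 e2.1 with h | h
    · exact ⟨_, ⟨e1, rfl⟩, fun ε hε => ⟨hε, le_trans hε h⟩⟩
    · exact ⟨_, ⟨e2, rfl⟩, fun ε hε => ⟨le_trans hε h, hε⟩⟩
  directed := by
    rintro e a A ⟨e0, rfl⟩ ha hea
    refine ⟨⟨e, le_trans hea ha, le_refl _⟩, ?_⟩
    intro b c hb hbe hc hce
    have hmpos : 0 < min b.1 c.1 := lt_min b.2.1 c.2.1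
    have hmb : min b.1 c.1 ≤ b.1 := min_le_left _ _
    have hmc : min b.1 c.1 ≤ c.1 := min_le_right _ _
    have hb1 : b.1 ≤ 1 := b.2.2
    refine ⟨⟨min b.1 c.1 / 2, by positivity, by linarith⟩, ?_, ?_, ⟨?_, ?_⟩, ⟨?_, ?_⟩⟩
    · show min b.1 c.1 / 2 ≤ e0.1
      have : b.1 ≤ e0.1 := hb
      linarith
    · show min b.1 c.1 / 2 ≤ e.1
      linarith
    · show min b.1 c.1 / 2 ≤ b.1
      linarith
    · intro h
      have := congrArg Subtype.val h
      simp only at this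
      have : min b.1 c.1 / 2 = b.1 := this
      linarith
    · show min b.1 c.1 / 2 ≤ c.1
      linarith
    · intro h
      have := congrArg Subtype.val h
      simp only at this
      have : min b.1 c.1 / 2 = c.1 := this
      linarith

/-- A minimum element of `I01`. -/
def I01.min (a b : I01) : I01 :=
  ⟨Min.min a.1 b.1, lt_min a.2.1 b.2.1, le_trans (min_le_left _ _) a.2.2⟩

lemma I01min_le_left (a b : I01) : (I01.min a b).1 ≤ a.1 := by
  show Min.min a.1 b.1 ≤ a.1; exact min_le_left _ _

lemma I01min_le_right (a b : I01) : (I01.min a b).1 ≤ b.1 := by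
  show Min.min a.1 b.1 ≤ b.1; exact min_le_right _ _

lemma evS_of_ev {P : I01 → Prop} (h : ∀ᶠ ε in zeroPlus, P ε) : EvS P := by
  obtain ⟨t, ht, hsub⟩ := h
  obtain ⟨u, hu, hIoo⟩ := mem_nhdsGT_iff_exists_Ioo_subset.mp ht
  refine ⟨⟨min (u / 2) 1, lt_min (by simpa using hu) one_pos, min_le_right _ _⟩,
    fun ε hε => ?_⟩
  apply hsub
  apply hIoo
  have h2 : ε.1 ≤ min (u / 2) 1 := hε
  have : (0 : ℝ) < u := by simpa using hu
  exact ⟨ε.2.1, lt_of_le_of_lt (le_trans h2 (min_le_left _ _)) (by linarith)⟩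

lemma evS_le (f : I01 → I01)
    (hf : Filter.Tendsto (fun ε => (f ε).1) zeroPlus (nhds 0)) (δ : I01) :
    EvS fun ε => (f ε).1 ≤ δ.1 := by
  have h : ∀ᶠ ε in zeroPlus, (f ε).1 < δ.1 := hf (Iio_mem_nhds δ.2.1)
  exact evS_of_ev (h.mono fun ε hε => le_of_lt hε)

lemma bigOs_pow {x y : I01 → ℝ} (h : BigOs x y) (m : ℕ) :
    BigOs (fun ε => x ε ^ m) (fun ε => y ε ^ m) := by
  obtain ⟨H, hH, ε₀, hε₀⟩ := h
  refine ⟨H ^ m, pow_pos hH m, ε₀, fun ε hε => ?_⟩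
  have := hε₀ ε hε
  calc |x ε ^ m| = |x ε| ^ m := abs_pow _ _
    _ ≤ (H * |y ε|) ^ m := pow_le_pow_left₀ (abs_nonneg _) this m
    _ = H ^ m * |y ε ^ m| := by rw [mul_pow, abs_pow]

lemma bigOs_trans {x y z : I01 → ℝ} (h1 : BigOs x y) (h2 : BigOs y z) :
    BigOs x z := by
  obtain ⟨H1, hH1, ε₁, hε₁⟩ := h1
  obtain ⟨H2, hH2, ε₂, hε₂⟩ := h2
  refine ⟨H1 * H2, mul_pos hH1 hH2, I01.min ε₁ ε₂, fun ε hε => ?_⟩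
  have he1 : ε.1 ≤ ε₁.1 := le_trans hε (I01min_le_left _ _)
  have he2 : ε.1 ≤ ε₂.1 := le_trans hε (I01min_le_right _ _)
  calc |x ε| ≤ H1 * |y ε| := hε₁ ε he1
    _ ≤ H1 * (H2 * |z ε|) := by
        have := hε₂ ε he2; nlinarith [abs_nonneg (y ε)]
    _ = H1 * H2 * |z ε| := by ring

/-- The key transfer: `ℝ_M(AG(b) ∘ η) = ℝ_M(AG(c))`. -/
lemma RMs_comp_eq (b c : I01 → ℝ) (eta lam : I01 → I01)
    (hinv : ∀ ε, lam (eta ε) = ε)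
    (heta0 : Filter.Tendsto (fun ε => (eta ε).1) zeroPlus (nhds 0))
    (hbc : BigOs (fun ε => b (eta ε)) c)
    (hcb : BigOs (fun ε => c (lam ε)) b) :
    RMs (compS (AGgen b) eta) = RMs (AGgen c) := by
  have hcb' : BigOs c (fun ε => b (eta ε)) := by
    obtain ⟨H, hH, ε₀, hε₀⟩ := hcb
    obtain ⟨ε₁, hε₁⟩ := evS_le eta heta0 ε₀
    refine ⟨H, hH, ε₁, fun ε hε => ?_⟩
    have h := hε₀ (eta ε) (hε₁ ε hε)
    simp only [hinv] at h
    exact h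
  ext x
  constructor
  · rintro ⟨g, ⟨b', ⟨m, rfl⟩, rfl⟩, hO⟩
    exact ⟨fun ε => c ε ^ m, ⟨m, rfl⟩, bigOs_trans hO (bigOs_pow hbc m)⟩
  · rintro ⟨g, ⟨m, rfl⟩, hO⟩
    exact ⟨(fun ε => b ε ^ m) ∘ eta, ⟨fun ε => b ε ^ m, ⟨m, rfl⟩, rfl⟩,
      bigOs_trans hO (bigOs_pow hcb' m)⟩

lemma isMorphism_of_tendsto (f : I01 → I01)
    (hf : Filter.Tendsto (fun ε => (f ε).1) zeroPlus (nhds 0)) :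
    IsMorphism Is Is f := by
  rintro A ⟨e0, rfl⟩ a ha
  refine ⟨Set.univ, Is.univ_mem, fun b _ => ?_⟩
  rintro α ⟨hαA, hαa⟩
  obtain ⟨ε₁, hε₁⟩ := evS_le f hf α
  refine ⟨I01.min ε₁ b, ⟨Set.mem_univ _, I01min_le_right _ _⟩, fun ε₂ hε₂ => ?_⟩
  have h2 : ε₂.1 ≤ ε₁.1 := le_trans hε₂.2 (I01min_le_left _ _)
  have hfα : (f ε₂).1 ≤ α.1 := hε₁ ε₂ h2
  exact ⟨le_trans hfα hαA, hfα⟩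

/-- If `b, c` are infinite nets on `(0,1]` and `η, λ` are mutually inverse
maps tending to `0` at `0⁺` with `b_{η(ε)} = O(c_ε)` and `c_{λ(ε)} = O(b_ε)`,
then `ℝ_M(AG(b) ∘ η) = ℝ_M(AG(c))` and `ℝ_M(AG(c) ∘ λ) = ℝ_M(AG(b))`; in
particular `η` and `λ` are mutually inverse `Ag₁`-isomorphisms between
`AG(b)` and `AG(c)`. -/
theorem AGgen_iso (b c : I01 → ℝ)
    (hb : Filter.Tendsto b zeroPlus Filter.atTop)
    (hc : Filter.Tendsto c zeroPlus Filter.atTop)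
    (eta lam : I01 → I01)
    (hinv₁ : ∀ ε, eta (lam ε) = ε) (hinv₂ : ∀ ε, lam (eta ε) = ε)
    (heta0 : Filter.Tendsto (fun ε => (eta ε).1) zeroPlus (nhds 0))
    (hlam0 : Filter.Tendsto (fun ε => (lam ε).1) zeroPlus (nhds 0))
    (hbc : BigOs (fun ε => b (eta ε)) c)
    (hcb : BigOs (fun ε => c (lam ε)) b) :
    RMs (compS (AGgen b) eta) = RMs (AGgen c) ∧
    RMs (compS (AGgen c) lam) = RMs (AGgen b) ∧
    IsMorphism Is Is eta ∧ IsMorphism Is Is lam := by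
  exact ⟨RMs_comp_eq b c eta lam hinv₂ heta0 hbc hcb,
    RMs_comp_eq c b lam eta hinv₁ hlam0 hcb hbc,
    isMorphism_of_tendsto eta heta0, isMorphism_of_tendsto lam hlam0⟩
end
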